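/- arXiv:2507.18145 — 3 statements merged into one kernel-verified Lean document; each statement's English description precedes it below -/
import Mathlib

section
/- For every AFML formula φ over Π there exists a simple Mean-GNN with truncated ReLU activation ReLU*(x) = min(max(0,x),1) (hence with continuous combination functions) that accepts a pointed Π-labeled graph (G,v) if and only if G,v ⊨ φ (uniformly, over all graphs). -/
open scoped Classical

/-- A `α`-labeled finite directed graph. -/
structure LabeledGraph (α : Type) : Type 1 where
  V : Type
  [fintypeV : Fintype V]
  adj : V → V → Prop
  label : V → α → Prop

attribute [instance] LabeledGraph.fintypeV

namespace LabeledGraph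

variable {α : Type}

/-- The neighborhood (set of successors) of a vertex. -/
def nbhd (G : LabeledGraph α) (v : G.V) : Set G.V := {u | G.adj v u}

/-- The neighborhood of a vertex, as a finset. -/
noncomputable def nbhdFinset (G : LabeledGraph α) (v : G.V) : Finset G.V :=
  Finset.univ.filter (fun u => G.adj v u)

/-- The `c`-scaling of a graph: each vertex is multiplied `c` times. -/
def scale (G : LabeledGraph α) (c : ℕ) : LabeledGraph α where
  V := G.V × Fin c
  adj := fun p q => G.adj p.1 q.1
  label := fun p => G.label p.1

end LabeledGraph

/-- Formulas of modal logic ML. -/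
inductive ML (α : Type) : Type where
  | atom : α → ML α
  | neg  : ML α → ML α
  | or   : ML α → ML α → ML α
  | dia  : ML α → ML α

/-- Satisfaction for ML. -/
def ML.sat {α : Type} (G : LabeledGraph α) : ML α → G.V → Prop
  | .atom p, v => G.label v p
  | .neg φ, v => ¬ ML.sat G φ v
  | .or φ ψ, v => ML.sat G φ v ∨ ML.sat G ψ v
  | .dia φ, v => ∃ u, G.adj v u ∧ ML.sat G φ u

/-- Formulas of graded modal logic GML. -/
inductive GML (α : Type) : Type where
  | atom : α → GML α
  | neg  : GML α → GML α
  | or   : GML α → GML α → GML α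
  | dia  : ℕ → GML α → GML α

/-- Satisfaction for GML: `dia n φ` is `◊^{≥n} φ`. -/
def GML.sat {α : Type} (G : LabeledGraph α) : GML α → G.V → Prop
  | .atom p, v => G.label v p
  | .neg φ, v => ¬ GML.sat G φ v
  | .or φ ψ, v => GML.sat G φ v ∨ GML.sat G ψ v
  | .dia n φ, v => n ≤ {u | G.adj v u ∧ GML.sat G φ u}.ncard

/-- Formulas of ratio modal logic RML; diamonds carry a ratio `r ∈ [0,1]`. -/
inductive RML (α : Type) : Type where
  | atom  : α → RML α
  | neg   : RML α → RML α
  | or    : RML α → RML α → RML α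
  | diaGe : Set.Icc (0:ℝ) 1 → RML α → RML α
  | diaGt : Set.Icc (0:ℝ) 1 → RML α → RML α

/-- Satisfaction for RML. If a vertex has no successors then `◊^{≥r}φ`
holds and `◊^{>r}φ` fails; otherwise the fraction of successors satisfying
`φ` is compared with `r`. -/
noncomputable def RML.sat {α : Type} (G : LabeledGraph α) : RML α → G.V → Prop
  | .atom p, v => G.label v p
  | .neg φ, v => ¬ RML.sat G φ v
  | .or φ ψ, v => RML.sat G φ v ∨ RML.sat G ψ v
  | .diaGe r φ, v => (G.nbhd v).Nonempty →
      (r : ℝ) ≤ ({u | G.adj v u ∧ RML.sat G φ u}.ncard : ℝ) / ((G.nbhd v).ncard : ℝ)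
  | .diaGt r φ, v => (G.nbhd v).Nonempty ∧
      (r : ℝ) < ({u | G.adj v u ∧ RML.sat G φ u}.ncard : ℝ) / ((G.nbhd v).ncard : ℝ)

/-- Formulas of AFML[1] (diamond fragment of alternation-free modal logic). -/
inductive AFML1 (α : Type) : Type where
  | atom   : α → AFML1 α
  | natom  : α → AFML1 α
  | boxBot : AFML1 α
  | and    : AFML1 α → AFML1 α → AFML1 α
  | or     : AFML1 α → AFML1 α → AFML1 α
  | dia    : AFML1 α → AFML1 α

/-- Satisfaction for AFML[1]. -/
def AFML1.sat {α : Type} (G : LabeledGraph α) : AFML1 α → G.V → Prop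
  | .atom p, v => G.label v p
  | .natom p, v => ¬ G.label v p
  | .boxBot, v => ∀ u, ¬ G.adj v u
  | .and φ ψ, v => AFML1.sat G φ v ∧ AFML1.sat G ψ v
  | .or φ ψ, v => AFML1.sat G φ v ∨ AFML1.sat G ψ v
  | .dia φ, v => ∃ u, G.adj v u ∧ AFML1.sat G φ u

/-- Modal depth of an AFML[1] formula. -/
def AFML1.depth {α : Type} : AFML1 α → ℕ
  | .atom _ => 0
  | .natom _ => 0
  | .boxBot => 1
  | .and φ ψ => max (AFML1.depth φ) (AFML1.depth ψ)
  | .or φ ψ => max (AFML1.depth φ) (AFML1.depth ψ)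
  | .dia φ => AFML1.depth φ + 1

/-- Formulas of AFML[2] (box fragment of alternation-free modal logic). -/
inductive AFML2 (α : Type) : Type where
  | atom   : α → AFML2 α
  | natom  : α → AFML2 α
  | diaTop : AFML2 α
  | and    : AFML2 α → AFML2 α → AFML2 α
  | or     : AFML2 α → AFML2 α → AFML2 α
  | box    : AFML2 α → AFML2 α

/-- Satisfaction for AFML[2]. -/
def AFML2.sat {α : Type} (G : LabeledGraph α) : AFML2 α → G.V → Prop
  | .atom p, v => G.label v p
  | .natom p, v => ¬ G.label v p
  | .diaTop, v => ∃ u, G.adj v u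
  | .and φ ψ, v => AFML2.sat G φ v ∧ AFML2.sat G ψ v
  | .or φ ψ, v => AFML2.sat G φ v ∨ AFML2.sat G ψ v
  | .box φ, v => ∀ u, G.adj v u → AFML2.sat G φ u

/-- Alternation-free modal logic: AFML[1] formulas together with AFML[2] formulas. -/
def AFML (α : Type) : Type := AFML1 α ⊕ AFML2 α

/-- Satisfaction for AFML. -/
def AFML.sat {α : Type} (G : LabeledGraph α) : AFML α → G.V → Prop
  | .inl φ => AFML1.sat G φ
  | .inr φ => AFML2.sat G φ

/-- The three aggregation functions. -/
inductive Agg : Type where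
  | sum : Agg
  | mean : Agg
  | max : Agg

/-- Apply an aggregation function componentwise to the (multiset of) values of `x`
over the finset `s`; empty aggregation yields `0` (so mean of the empty multiset is `0`). -/
noncomputable def Agg.apply {V : Type} : Agg → Finset V → (V → ℝ) → ℝ
  | .sum, s, x => ∑ u ∈ s, x u
  | .mean, s, x => (∑ u ∈ s, x u) / (s.card : ℝ)
  | .max, s, x => if h : s.Nonempty then s.sup' h x else 0

/-- A GNN: `L` layers, dimensions `δ 0, …, δ L` with `δ 0 = |α|`,
combination functions `com ℓ : ℝ^{δ ℓ} × ℝ^{δ ℓ} → ℝ^{δ (ℓ+1)}` for `ℓ < L`,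
and a threshold classification function `CLS(x) = 1 iff x_clsIdx ∼ clsThr`
where `∼` is `>` if `clsStrict` and `≥` otherwise. -/
structure GNN (α : Type) [Fintype α] : Type where
  L : ℕ
  δ : ℕ → ℕ
  hδ0 : δ 0 = Fintype.card α
  com : (ℓ : ℕ) → (Fin (δ ℓ) → ℝ) → (Fin (δ ℓ) → ℝ) → (Fin (δ (ℓ+1)) → ℝ)
  clsIdx : Fin (δ L)
  clsStrict : Bool
  clsThr : ℝ

/-- The feature vector computed by a GNN (with aggregation `agg`) at layer `ℓ`
at vertex `v` of graph `G`. Layer 0 yields the 0/1 indicator vector of the labels. -/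
noncomputable def GNN.feat {α : Type} [Fintype α] (𝒢 : GNN α) (agg : Agg)
    (G : LabeledGraph α) : (ℓ : ℕ) → G.V → Fin (𝒢.δ ℓ) → ℝ
  | 0, v, i => if G.label v ((Fintype.equivFin α).symm (Fin.cast 𝒢.hδ0 i)) then 1 else 0
  | (ℓ+1), v, i =>
      𝒢.com ℓ (𝒢.feat agg G ℓ v)
        (fun j => agg.apply (G.nbhdFinset v) (fun u => 𝒢.feat agg G ℓ u j)) i

/-- The GNN accepts a pointed graph iff the classification function outputs 1 on
the final feature vector. -/
noncomputable def GNN.accepts {α : Type} [Fintype α] (𝒢 : GNN α) (agg : Agg)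
    (G : LabeledGraph α) (v : G.V) : Prop :=
  if 𝒢.clsStrict then 𝒢.clsThr < 𝒢.feat agg G 𝒢.L v 𝒢.clsIdx
  else 𝒢.clsThr ≤ 𝒢.feat agg G 𝒢.L v 𝒢.clsIdx

/-- A GNN is simple with activation function `f` if each combination function
has the form `COM(x_v, x_a) = f(x_v·C + x_a·A + b)` (componentwise `f`). -/
def GNN.IsSimple {α : Type} [Fintype α] (𝒢 : GNN α) (f : ℝ → ℝ) : Prop :=
  ∀ ℓ < 𝒢.L, ∃ (C A : Fin (𝒢.δ ℓ) → Fin (𝒢.δ (ℓ+1)) → ℝ) (b : Fin (𝒢.δ (ℓ+1)) → ℝ),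
    ∀ (xv xa : Fin (𝒢.δ ℓ) → ℝ) (i : Fin (𝒢.δ (ℓ+1))),
      𝒢.com ℓ xv xa i = f ((∑ j, xv j * C j i) + (∑ j, xa j * A j i) + b i)

/-- All combination functions of the GNN are continuous. -/
def GNN.HasContinuousCom {α : Type} [Fintype α] (𝒢 : GNN α) : Prop :=
  ∀ ℓ < 𝒢.L,
    Continuous (fun p : (Fin (𝒢.δ ℓ) → ℝ) × (Fin (𝒢.δ ℓ) → ℝ) => 𝒢.com ℓ p.1 p.2)

/-- Truncated ReLU. -/
noncomputable def reluStar : ℝ → ℝ := fun x => min (max 0 x) 1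

/-- ReLU. -/
noncomputable def relu : ℝ → ℝ := fun x => max 0 x

/-- Two pointed graphs have the same vertex labels at their distinguished vertices. -/
def labelsEq {α : Type} (G1 G2 : LabeledGraph α) (v1 : G1.V) (v2 : G2.V) : Prop :=
  ∀ p, G1.label v1 p ↔ G2.label v2 p

/-- Spoiler wins the `ℓ`-round ML game on `((G1,v1),(G2,v2))`. -/
def spoilerWinsML {α : Type} (G1 G2 : LabeledGraph α) : ℕ → G1.V → G2.V → Prop
  | 0, v1, v2 => ¬ labelsEq G1 G2 v1 v2
  | (ℓ+1), v1, v2 =>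
      ¬ labelsEq G1 G2 v1 v2
      ∨ (∃ u1, G1.adj v1 u1 ∧ ∀ u2, G2.adj v2 u2 → spoilerWinsML G1 G2 ℓ u1 u2)
      ∨ (∃ u2, G2.adj v2 u2 ∧ ∀ u1, G1.adj v1 u1 → spoilerWinsML G1 G2 ℓ u1 u2)

/-- Spoiler wins the `ℓ`-round AFML[1] game on `((G1,v1),(G2,v2))`. -/
def spoilerWinsAFML1 {α : Type} (G1 G2 : LabeledGraph α) : ℕ → G1.V → G2.V → Prop
  | 0, v1, v2 => ¬ labelsEq G1 G2 v1 v2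
  | (ℓ+1), v1, v2 =>
      ¬ labelsEq G1 G2 v1 v2
      ∨ ((∀ u, ¬ G1.adj v1 u) ∧ (∃ u, G2.adj v2 u))
      ∨ (∃ u1, G1.adj v1 u1 ∧ ∀ u2, G2.adj v2 u2 → spoilerWinsAFML1 G1 G2 ℓ u1 u2)

/-- Spoiler wins the `ℓ`-round GML game with counting bound `c` on `((G1,v1),(G2,v2))`. -/
def spoilerWinsGML {α : Type} (c : ℕ) (G1 G2 : LabeledGraph α) : ℕ → G1.V → G2.V → Prop
  | 0, v1, v2 => ¬ labelsEq G1 G2 v1 v2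
  | (ℓ+1), v1, v2 =>
      ¬ labelsEq G1 G2 v1 v2
      ∨ (∃ U1 : Finset G1.V, (∀ u ∈ U1, G1.adj v1 u) ∧ 0 < U1.card ∧ U1.card ≤ c ∧
          ((G2.nbhd v2).ncard < U1.card ∨
            ∀ U2 : Finset G2.V, (∀ u ∈ U2, G2.adj v2 u) → U2.card = U1.card →
              ∃ u2 ∈ U2, ∀ u1 ∈ U1, spoilerWinsGML c G1 G2 ℓ u1 u2))
      ∨ (∃ U2 : Finset G2.V, (∀ u ∈ U2, G2.adj v2 u) ∧ 0 < U2.card ∧ U2.card ≤ c ∧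
          ((G1.nbhd v1).ncard < U2.card ∨
            ∀ U1 : Finset G1.V, (∀ u ∈ U1, G1.adj v1 u) → U1.card = U2.card →
              ∃ u1 ∈ U1, ∀ u2 ∈ U2, spoilerWinsGML c G1 G2 ℓ u1 u2))

/-- The ratio `1/2` as an element of `[0,1]`. -/
noncomputable def half : Set.Icc (0:ℝ) 1 := ⟨1/2, by norm_num⟩

set_option linter.unusedSectionVars false

namespace Stmt17P

set_option linter.unusedSectionVars false

variable {α : Type} [Fintype α]

lemma reluStar_of_mem {x : ℝ} (h0 : 0 ≤ x) (h1 : x ≤ 1) : reluStar x = x := by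
  simp only [reluStar, max_eq_right h0, min_eq_left h1]

lemma reluStar_zero : reluStar 0 = 0 := by norm_num [reluStar]
lemma reluStar_one : reluStar 1 = 1 := by norm_num [reluStar]

lemma reluStar_nonneg (x : ℝ) : 0 ≤ reluStar x :=
  le_min (le_max_left 0 x) zero_le_one

lemma reluStar_le_one (x : ℝ) : reluStar x ≤ 1 := min_le_right _ _

lemma reluStar_of_nonneg {x : ℝ} (h0 : 0 ≤ x) : reluStar x = min x 1 := by
  simp [reluStar, max_eq_right h0]

lemma reluStar_min {x y : ℝ} (hx0 : 0 ≤ x) (hx1 : x ≤ 1) (hy0 : 0 ≤ y) (hy1 : y ≤ 1) :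
    reluStar (x - reluStar (x - y)) = min x y := by
  have h1 : reluStar (x - y) = max 0 (x - y) := by
    unfold reluStar
    exact min_eq_left (max_le zero_le_one (by linarith))
  rw [h1]
  rcases le_total x y with h | h
  · rw [max_eq_left (by linarith), sub_zero, reluStar_of_mem hx0 hx1, min_eq_left h]
  · rw [max_eq_right (by linarith), show x - (x - y) = y by ring,
      reluStar_of_mem hy0 hy1, min_eq_right h]

/-! ### subformulas and cost -/

def subf : AFML1 α → List (AFML1 α)
  | .atom P => [.atom P]
  | .natom P => [.natom P]
  | .boxBot => [.boxBot]
  | .and ψ χ => .and ψ χ :: (subf ψ ++ subf χ)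
  | .or ψ χ => .or ψ χ :: (subf ψ ++ subf χ)
  | .dia ψ => .dia ψ :: subf ψ

lemma self_mem_subf (ψ : AFML1 α) : ψ ∈ subf ψ := by
  cases ψ <;> simp [subf]

lemma subf_subset {θ : AFML1 α} : ∀ {χ : AFML1 α}, χ ∈ subf θ → subf χ ⊆ subf θ := by
  induction θ with
  | atom P => intro χ h; simp [subf] at h; subst h; exact fun _ h => h
  | natom P => intro χ h; simp [subf] at h; subst h; exact fun _ h => h
  | boxBot => intro χ h; simp [subf] at h; subst h; exact fun _ h => h
  | and ψ₁ ψ₂ ih1 ih2 =>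
    intro χ h
    rcases List.mem_cons.mp h with h | h
    · subst h; exact fun _ h => h
    · rcases List.mem_append.mp h with h | h
      · exact fun x hx => List.mem_cons_of_mem _ (List.mem_append_left _ (ih1 h hx))
      · exact fun x hx => List.mem_cons_of_mem _ (List.mem_append_right _ (ih2 h hx))
  | or ψ₁ ψ₂ ih1 ih2 =>
    intro χ h
    rcases List.mem_cons.mp h with h | h
    · subst h; exact fun _ h => h
    · rcases List.mem_append.mp h with h | h
      · exact fun x hx => List.mem_cons_of_mem _ (List.mem_append_left _ (ih1 h hx))
      · exact fun x hx => List.mem_cons_of_mem _ (List.mem_append_right _ (ih2 h hx))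
  | dia ψ ih =>
    intro χ h
    rcases List.mem_cons.mp h with h | h
    · subst h; exact fun _ h => h
    · exact fun x hx => List.mem_cons_of_mem _ (ih h hx)

def cost : AFML1 α → ℕ
  | .atom _ => 1
  | .natom _ => 1
  | .boxBot => 2
  | .and ψ χ => max (cost ψ) (cost χ) + 2
  | .or ψ χ => max (cost ψ) (cost χ) + 1
  | .dia ψ => cost ψ + 1

lemma one_le_cost (ψ : AFML1 α) : 1 ≤ cost ψ := by
  cases ψ <;> simp [cost]

/-! ### semantic values -/

noncomputable def val (G : LabeledGraph α) : AFML1 α → G.V → ℝ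
  | .atom P, v => if G.label v P then 1 else 0
  | .natom P, v => if G.label v P then 0 else 1
  | .boxBot, v => if (G.nbhdFinset v).Nonempty then 0 else 1
  | .and ψ χ, v => min (val G ψ v) (val G χ v)
  | .or ψ χ, v => min (val G ψ v + val G χ v) 1
  | .dia ψ, v => (∑ u ∈ G.nbhdFinset v, val G ψ u) / ((G.nbhdFinset v).card : ℝ)

lemma mean_bounds {V : Type} [Fintype V] (s : Finset V) (x : V → ℝ)
    (h : ∀ u ∈ s, 0 ≤ x u ∧ x u ≤ 1) :
    0 ≤ (∑ u ∈ s, x u) / (s.card : ℝ) ∧ (∑ u ∈ s, x u) / (s.card : ℝ) ≤ 1 := by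
  rcases s.eq_empty_or_nonempty with rfl | hs
  · simp
  · have hc : (0:ℝ) < (s.card : ℝ) := by exact_mod_cast Finset.card_pos.mpr hs
    constructor
    · exact div_nonneg (Finset.sum_nonneg fun u hu => (h u hu).1) hc.le
    · rw [div_le_one hc]
      calc (∑ u ∈ s, x u) ≤ ∑ u ∈ s, 1 := Finset.sum_le_sum fun u hu => (h u hu).2
        _ = (s.card : ℝ) := by simp

lemma val_bounds (G : LabeledGraph α) (ψ : AFML1 α) : ∀ v, 0 ≤ val G ψ v ∧ val G ψ v ≤ 1 := by
  induction ψ with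
  | atom P => intro v; by_cases h : G.label v P <;> simp [val, h]
  | natom P => intro v; by_cases h : G.label v P <;> simp [val, h]
  | boxBot => intro v; by_cases h : (G.nbhdFinset v).Nonempty <;> simp [val, h]
  | and ψ χ ih1 ih2 =>
    intro v
    exact ⟨le_min (ih1 v).1 (ih2 v).1, min_le_of_left_le (ih1 v).2⟩
  | or ψ χ ih1 ih2 =>
    intro v
    exact ⟨le_min (by nlinarith [(ih1 v).1, (ih2 v).1]) zero_le_one, min_le_right _ _⟩
  | dia ψ ih =>
    intro v
    exact mean_bounds _ _ fun u _ => ih u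

lemma val_pos_iff (G : LabeledGraph α) (ψ : AFML1 α) :
    ∀ v, (0 < val G ψ v ↔ AFML1.sat G ψ v) := by
  induction ψ with
  | atom P => intro v; by_cases h : G.label v P <;> simp [val, AFML1.sat, h]
  | natom P => intro v; by_cases h : G.label v P <;> simp [val, AFML1.sat, h]
  | boxBot =>
    intro v
    by_cases h : (G.nbhdFinset v).Nonempty
    · obtain ⟨u, hu⟩ := h
      simp only [LabeledGraph.nbhdFinset, Finset.mem_filter] at hu
      simp only [val, AFML1.sat]
      rw [if_pos ⟨u, by simp [LabeledGraph.nbhdFinset, hu.2]⟩]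
      simp only [lt_self_iff_false, false_iff, not_forall, not_not]
      exact ⟨u, hu.2⟩
    · simp only [val, AFML1.sat, if_neg h]
      simp only [zero_lt_one, true_iff]
      intro u hadj
      exact h ⟨u, by simp [LabeledGraph.nbhdFinset, hadj]⟩
  | and ψ χ ih1 ih2 =>
    intro v
    simp [val, AFML1.sat, lt_min_iff, ih1 v, ih2 v]
  | or ψ χ ih1 ih2 =>
    intro v
    simp only [val, AFML1.sat, lt_min_iff, zero_lt_one, and_true]
    rw [← ih1 v, ← ih2 v]
    constructor
    · intro h
      by_contra hc
      push_neg at hc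
      have h1 := (val_bounds G ψ v).1
      have h2 := (val_bounds G χ v).1
      have e1 : val G ψ v = 0 := le_antisymm hc.1 h1
      have e2 : val G χ v = 0 := le_antisymm hc.2 h2
      rw [e1, e2] at h; simp at h
    · intro h
      rcases h with h | h
      · have := (val_bounds G χ v).1; linarith
      · have := (val_bounds G ψ v).1; linarith
  | dia ψ ih =>
    intro v
    simp only [val, AFML1.sat]
    constructor
    · intro h
      rcases (G.nbhdFinset v).eq_empty_or_nonempty with he | hne
      · rw [he] at h; simp at h
      · have hc : (0:ℝ) < ((G.nbhdFinset v).card : ℝ) := by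
          exact_mod_cast Finset.card_pos.mpr hne
        have hsum : 0 < ∑ u ∈ G.nbhdFinset v, val G ψ u := by
          by_contra hs
          push_neg at hs
          have : (∑ u ∈ G.nbhdFinset v, val G ψ u) / ((G.nbhdFinset v).card : ℝ) ≤ 0 :=
            div_nonpos_of_nonpos_of_nonneg hs hc.le
          linarith
        obtain ⟨u, hu, hpos⟩ : ∃ u ∈ G.nbhdFinset v, 0 < val G ψ u := by
          by_contra hs
          push_neg at hs
          have : (∑ u ∈ G.nbhdFinset v, val G ψ u) ≤ 0 :=
            Finset.sum_nonpos fun u hu => hs u hu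
          linarith
        refine ⟨u, ?_, (ih u).mp hpos⟩
        simpa [LabeledGraph.nbhdFinset] using hu
    · rintro ⟨u, hadj, hsat⟩
      have hu : u ∈ G.nbhdFinset v := by simp [LabeledGraph.nbhdFinset, hadj]
      have hne : (G.nbhdFinset v).Nonempty := ⟨u, hu⟩
      have hc : (0:ℝ) < ((G.nbhdFinset v).card : ℝ) := by
        exact_mod_cast Finset.card_pos.mpr hne
      have hsum : 0 < ∑ u ∈ G.nbhdFinset v, val G ψ u := by
        have h1 : 0 < val G ψ u := (ih u).mpr hsat
        have h2 : val G ψ u ≤ ∑ u ∈ G.nbhdFinset v, val G ψ u :=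
          Finset.single_le_sum (fun w _ => (val_bounds G ψ w).1) hu
        linarith
      exact div_pos hsum hc

/-! ### the construction -/

section Construction

variable (φ0 : AFML1 α)

abbrev Idx (φ0 : AFML1 α) : Type := Bool ⊕ ({ψ : AFML1 α // ψ ∈ subf φ0} × Bool)

noncomputable def cM (ψ : AFML1 α) : Idx φ0 :=
  if h : ψ ∈ subf φ0 then Sum.inr (⟨ψ, h⟩, false) else Sum.inl false

noncomputable def cA (ψ : AFML1 α) : Idx φ0 :=
  if h : ψ ∈ subf φ0 then Sum.inr (⟨ψ, h⟩, true) else Sum.inl false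

lemma cM_eq {ψ : AFML1 α} (h : ψ ∈ subf φ0) : cM φ0 ψ = Sum.inr (⟨ψ, h⟩, false) := dif_pos h

lemma cA_eq {ψ : AFML1 α} (h : ψ ∈ subf φ0) : cA φ0 ψ = Sum.inr (⟨ψ, h⟩, true) := dif_pos h

noncomputable def dl (k j : Idx φ0) : ℝ := if j = k then 1 else 0

lemma sum_dl (x : Idx φ0 → ℝ) (k : Idx φ0) : (∑ j : Idx φ0, x j * dl φ0 k j) = x k := by
  simp [dl, mul_ite]

noncomputable def Cmain : AFML1 α → Idx φ0 → ℝ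
  | .atom P, j => dl φ0 (cM φ0 (.atom P)) j
  | .natom P, j => dl φ0 (cM φ0 (.natom P)) j
  | .boxBot, _ => 0
  | .and ψ χ, j => dl φ0 (cM φ0 ψ) j - dl φ0 (cA φ0 (.and ψ χ)) j
  | .or ψ χ, j => dl φ0 (cM φ0 ψ) j + dl φ0 (cM φ0 χ) j
  | .dia _, _ => 0

noncomputable def Amain : AFML1 α → Idx φ0 → ℝ
  | .boxBot, j => -(dl φ0 (Sum.inl false) j)
  | .dia ψ, j => dl φ0 (cM φ0 ψ) j
  | _, _ => 0

def bmain : AFML1 α → ℝ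
  | .boxBot => 1
  | _ => 0

noncomputable def Caux : AFML1 α → Idx φ0 → ℝ
  | .and ψ χ, j => dl φ0 (cM φ0 ψ) j - dl φ0 (cM φ0 χ) j
  | _, _ => 0

noncomputable def CI : Idx φ0 → Idx φ0 → ℝ := fun j i =>
  match i with
  | .inl false => dl φ0 (Sum.inl false) j
  | .inl true => dl φ0 (Sum.inl false) j - dl φ0 (cM φ0 φ0) j
  | .inr (⟨ψ, _⟩, false) => Cmain φ0 ψ j
  | .inr (⟨ψ, _⟩, true) => Caux φ0 ψ j

noncomputable def AI : Idx φ0 → Idx φ0 → ℝ := fun j i =>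
  match i with
  | .inl _ => 0
  | .inr (⟨ψ, _⟩, false) => Amain φ0 ψ j
  | .inr (_, true) => 0

noncomputable def bI : Idx φ0 → ℝ := fun i =>
  match i with
  | .inl _ => 0
  | .inr (⟨ψ, _⟩, false) => bmain ψ
  | .inr (_, true) => 0

noncomputable def C0main : AFML1 α → Fin (Fintype.card α) → ℝ
  | .atom P, j => if j = Fintype.equivFin α P then 1 else 0
  | .natom P, j => if j = Fintype.equivFin α P then -1 else 0
  | _, _ => 0

def b0main : AFML1 α → ℝ
  | .natom _ => 1
  | _ => 0

noncomputable def C0I : Fin (Fintype.card α) → Idx φ0 → ℝ := fun j i =>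
  match i with
  | .inr (⟨ψ, _⟩, false) => C0main ψ j
  | _ => 0

noncomputable def b0I : Idx φ0 → ℝ := fun i =>
  match i with
  | .inl false => 1
  | .inl true => 0
  | .inr (⟨ψ, _⟩, false) => b0main ψ
  | .inr (_, true) => 0

noncomputable def eI : Fin (Fintype.card (Idx φ0)) ≃ Idx φ0 := (Fintype.equivFin (Idx φ0)).symm

noncomputable def δfun : ℕ → ℕ := fun ℓ =>
  Nat.casesOn ℓ (Fintype.card α) (fun _ => Fintype.card (Idx φ0))

noncomputable def mkGNN (m : ℕ) (ci : Idx φ0) (str : Bool) (thr : ℝ) : GNN α where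
  L := m + 1
  δ := δfun φ0
  hδ0 := rfl
  com := fun ℓ => Nat.casesOn ℓ
    (fun xv xa i => reluStar ((∑ j, xv j * C0I φ0 j (eI φ0 i)) +
       (∑ j, xa j * (0:ℝ)) + b0I φ0 (eI φ0 i)))
    (fun _ xv xa i => reluStar ((∑ j, xv j * CI φ0 (eI φ0 j) (eI φ0 i)) +
       (∑ j, xa j * AI φ0 (eI φ0 j) (eI φ0 i)) + bI φ0 (eI φ0 i)))
  clsIdx := (eI φ0).symm ci
  clsStrict := str
  clsThr := thr

lemma mkGNN_simple (m : ℕ) (ci : Idx φ0) (str : Bool) (thr : ℝ) :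
    (mkGNN φ0 m ci str thr).IsSimple reluStar := by
  intro ℓ _
  cases ℓ with
  | zero =>
    exact ⟨fun j i => C0I φ0 j (eI φ0 i), fun _ _ => 0, fun i => b0I φ0 (eI φ0 i),
      fun xv xa i => rfl⟩
  | succ n =>
    exact ⟨fun j i => CI φ0 (eI φ0 j) (eI φ0 i), fun j i => AI φ0 (eI φ0 j) (eI φ0 i),
      fun i => bI φ0 (eI φ0 i), fun xv xa i => rfl⟩

section FeatLemmas

variable (m : ℕ) (ci : Idx φ0) (str : Bool) (thr : ℝ) (G : LabeledGraph α)

lemma feat_zero (v : G.V) (j : Fin (Fintype.card α)) :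
    (mkGNN φ0 m ci str thr).feat Agg.mean G 0 v j
      = if G.label v ((Fintype.equivFin α).symm j) then 1 else 0 := rfl

lemma feat_one (v : G.V) (k : Idx φ0) :
    (mkGNN φ0 m ci str thr).feat Agg.mean G 1 v ((eI φ0).symm k)
      = reluStar ((∑ P : α, (if G.label v P then (1:ℝ) else 0) * C0I φ0 (Fintype.equivFin α P) k)
          + b0I φ0 k) := by
  have base : (mkGNN φ0 m ci str thr).feat Agg.mean G 1 v ((eI φ0).symm k)
      = reluStar ((∑ j : Fin (Fintype.card α),
            (mkGNN φ0 m ci str thr).feat Agg.mean G 0 v j * C0I φ0 j (eI φ0 ((eI φ0).symm k)))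
          + (∑ j : Fin (Fintype.card α),
              Agg.apply Agg.mean (G.nbhdFinset v)
                (fun u => (mkGNN φ0 m ci str thr).feat Agg.mean G 0 u j) * (0:ℝ))
          + b0I φ0 (eI φ0 ((eI φ0).symm k))) := rfl
  rw [base]
  simp only [Equiv.apply_symm_apply, mul_zero, Finset.sum_const_zero, add_zero]
  congr 1
  congr 1
  refine (Fintype.sum_equiv (Fintype.equivFin α) _ _ (fun P => ?_)).symm
  rw [feat_zero, Equiv.symm_apply_apply]

lemma feat_succ_succ (ℓ : ℕ) (v : G.V) (k : Idx φ0) :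
    (mkGNN φ0 m ci str thr).feat Agg.mean G (ℓ+2) v ((eI φ0).symm k)
      = reluStar ((∑ j : Idx φ0,
            (mkGNN φ0 m ci str thr).feat Agg.mean G (ℓ+1) v ((eI φ0).symm j) * CI φ0 j k)
        + (∑ j : Idx φ0,
            (∑ u ∈ G.nbhdFinset v,
              (mkGNN φ0 m ci str thr).feat Agg.mean G (ℓ+1) u ((eI φ0).symm j))
              / ((G.nbhdFinset v).card : ℝ) * AI φ0 j k)
        + bI φ0 k) := by
  have base : (mkGNN φ0 m ci str thr).feat Agg.mean G (ℓ+2) v ((eI φ0).symm k)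
      = reluStar ((∑ j : Fin (Fintype.card (Idx φ0)),
            (mkGNN φ0 m ci str thr).feat Agg.mean G (ℓ+1) v j * CI φ0 (eI φ0 j) (eI φ0 ((eI φ0).symm k)))
        + (∑ j : Fin (Fintype.card (Idx φ0)),
            (∑ u ∈ G.nbhdFinset v,
              (mkGNN φ0 m ci str thr).feat Agg.mean G (ℓ+1) u j)
              / ((G.nbhdFinset v).card : ℝ) * AI φ0 (eI φ0 j) (eI φ0 ((eI φ0).symm k)))
        + bI φ0 (eI φ0 ((eI φ0).symm k))) := rfl
  rw [base]
  simp only [Equiv.apply_symm_apply]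
  have h1 : (∑ j : Fin (Fintype.card (Idx φ0)),
        (mkGNN φ0 m ci str thr).feat Agg.mean G (ℓ+1) v j * CI φ0 (eI φ0 j) k)
      = ∑ j : Idx φ0,
          (mkGNN φ0 m ci str thr).feat Agg.mean G (ℓ+1) v ((eI φ0).symm j) * CI φ0 j k :=
    Fintype.sum_equiv (eI φ0) _ _ (fun j => by rw [Equiv.symm_apply_apply])
  have h2 : (∑ j : Fin (Fintype.card (Idx φ0)),
        (∑ u ∈ G.nbhdFinset v, (mkGNN φ0 m ci str thr).feat Agg.mean G (ℓ+1) u j)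
          / ((G.nbhdFinset v).card : ℝ) * AI φ0 (eI φ0 j) k)
      = ∑ j : Idx φ0,
          (∑ u ∈ G.nbhdFinset v, (mkGNN φ0 m ci str thr).feat Agg.mean G (ℓ+1) u ((eI φ0).symm j))
            / ((G.nbhdFinset v).card : ℝ) * AI φ0 j k :=
    Fintype.sum_equiv (eI φ0) _ _ (fun j => by simp only [Equiv.symm_apply_apply])
  rw [h1, h2]

lemma const_correct : ∀ (ℓ : ℕ) (v : G.V),
    (mkGNN φ0 m ci str thr).feat Agg.mean G (ℓ+1) v ((eI φ0).symm (Sum.inl false)) = 1 := by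
  intro ℓ
  induction ℓ with
  | zero =>
    intro v
    rw [feat_one]
    simp only [C0I, b0I, mul_zero, Finset.sum_const_zero, zero_add]
    exact reluStar_one
  | succ n ih =>
    intro v
    rw [feat_succ_succ]
    simp only [CI, AI, bI, mul_zero, Finset.sum_const_zero, add_zero, sum_dl, ih v]
    exact reluStar_one

lemma aux_correct (ψ χ : AFML1 α) (hmem : AFML1.and ψ χ ∈ subf φ0) (ℓ : ℕ) (v : G.V)
    (hv1 : (mkGNN φ0 m ci str thr).feat Agg.mean G (ℓ+1) v ((eI φ0).symm (cM φ0 ψ)) = val G ψ v)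
    (hv2 : (mkGNN φ0 m ci str thr).feat Agg.mean G (ℓ+1) v ((eI φ0).symm (cM φ0 χ)) = val G χ v) :
    (mkGNN φ0 m ci str thr).feat Agg.mean G (ℓ+1+1) v
        ((eI φ0).symm (Sum.inr (⟨AFML1.and ψ χ, hmem⟩, true)))
      = reluStar (val G ψ v - val G χ v) := by
  rw [feat_succ_succ]
  simp only [CI, Caux, AI, bI, mul_zero, Finset.sum_const_zero, add_zero, mul_sub,
    Finset.sum_sub_distrib, sum_dl, hv1, hv2]

lemma main_correct :
    ∀ (ψ : AFML1 α) (h : ψ ∈ subf φ0) (ℓ : ℕ), cost ψ ≤ ℓ + 1 → ∀ v : G.V,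
      (mkGNN φ0 m ci str thr).feat Agg.mean G (ℓ+1) v
          ((eI φ0).symm (Sum.inr (⟨ψ, h⟩, false)))
        = val G ψ v := by
  intro ψ
  induction ψ with
  | atom P =>
    intro hmem ℓ _
    induction ℓ with
    | zero =>
      intro v
      rw [feat_one]
      simp only [C0I, C0main, b0I, b0main]
      simp only [EmbeddingLike.apply_eq_iff_eq, mul_ite, mul_one, mul_zero,
        Finset.sum_ite_eq', Finset.mem_univ, if_true, add_zero]
      by_cases h : G.label v P <;> simp [val, h, reluStar_one, reluStar_zero]
    | succ n ih =>
      intro v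
      rw [feat_succ_succ]
      simp only [CI, Cmain, AI, Amain, bI, bmain, mul_zero, Finset.sum_const_zero,
        add_zero, sum_dl]
      rw [cM_eq φ0 hmem, ih (Nat.succ_le_succ (Nat.zero_le n)) v]
      exact reluStar_of_mem (val_bounds G _ v).1 (val_bounds G _ v).2
  | natom P =>
    intro hmem ℓ _
    induction ℓ with
    | zero =>
      intro v
      rw [feat_one]
      simp only [C0I, C0main, b0I, b0main]
      simp only [EmbeddingLike.apply_eq_iff_eq, mul_ite, mul_neg_one, mul_zero,
        Finset.sum_ite_eq', Finset.mem_univ, if_true]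
      by_cases h : G.label v P <;> simp [val, h] <;> norm_num [reluStar]
    | succ n ih =>
      intro v
      rw [feat_succ_succ]
      simp only [CI, Cmain, AI, Amain, bI, bmain, mul_zero, Finset.sum_const_zero,
        add_zero, sum_dl]
      rw [cM_eq φ0 hmem, ih (Nat.succ_le_succ (Nat.zero_le n)) v]
      exact reluStar_of_mem (val_bounds G _ v).1 (val_bounds G _ v).2
  | boxBot =>
    intro hmem ℓ hc
    have h1 : 1 ≤ ℓ := Nat.succ_le_succ_iff.mp hc
    obtain ⟨n, rfl⟩ : ∃ n, ℓ = n + 1 := ⟨ℓ - 1, by omega⟩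
    intro v
    rw [feat_succ_succ]
    simp only [CI, Cmain, AI, Amain, bI, bmain, mul_zero, Finset.sum_const_zero, zero_add,
      mul_neg, Finset.sum_neg_distrib, sum_dl]
    rw [show (∑ u ∈ G.nbhdFinset v,
          (mkGNN φ0 m ci str thr).feat Agg.mean G (n+1) u ((eI φ0).symm (Sum.inl false)))
        = ∑ u ∈ G.nbhdFinset v, (1:ℝ) from
      Finset.sum_congr rfl fun u _ => const_correct φ0 m ci str thr G n u]
    rcases (G.nbhdFinset v).eq_empty_or_nonempty with he | hne
    · rw [he]
      simp only [val, he, Finset.not_nonempty_empty, if_false]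
      norm_num [reluStar]
    · have hc0 : ((G.nbhdFinset v).card : ℝ) ≠ 0 := by
        exact_mod_cast (Finset.card_pos.mpr hne).ne'
      simp only [val, hne, if_pos, Finset.sum_const, nsmul_eq_mul, mul_one, div_self hc0]
      norm_num [reluStar]
  | and ψ χ ihψ ihχ =>
    intro hmem ℓ hc
    have hψm : ψ ∈ subf φ0 :=
      subf_subset hmem (List.mem_cons_of_mem _ (List.mem_append_left _ (self_mem_subf ψ)))
    have hχm : χ ∈ subf φ0 :=
      subf_subset hmem (List.mem_cons_of_mem _ (List.mem_append_right _ (self_mem_subf χ)))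
    have hM : max (cost ψ) (cost χ) + 1 ≤ ℓ := Nat.succ_le_succ_iff.mp hc
    have h2 : 2 ≤ ℓ :=
      le_trans (Nat.succ_le_succ ((one_le_cost ψ).trans (le_max_left _ _))) hM
    obtain ⟨n, rfl⟩ : ∃ n, ℓ = n + 2 := ⟨ℓ - 2, by omega⟩
    have hMn : max (cost ψ) (cost χ) ≤ n + 1 := Nat.succ_le_succ_iff.mp hM
    have hcψ1 : cost ψ ≤ n + 1 := (le_max_left _ _).trans hMn
    have hcχ1 : cost χ ≤ n + 1 := (le_max_right _ _).trans hMn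
    have hcψ2 : cost ψ ≤ n + 1 + 1 := hcψ1.trans (Nat.le_succ _)
    intro v
    have haux := aux_correct φ0 m ci str thr G ψ χ hmem n v
      (by rw [cM_eq φ0 hψm]; exact ihψ hψm n hcψ1 v)
      (by rw [cM_eq φ0 hχm]; exact ihχ hχm n hcχ1 v)
    rw [feat_succ_succ]
    simp only [CI, Cmain, AI, Amain, bI, bmain, mul_zero, Finset.sum_const_zero, add_zero,
      mul_sub, Finset.sum_sub_distrib, sum_dl]
    rw [cM_eq φ0 hψm, cA_eq φ0 hmem, haux, ihψ hψm (n+1) hcψ2 v]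
    rw [reluStar_min (val_bounds G ψ v).1 (val_bounds G ψ v).2
      (val_bounds G χ v).1 (val_bounds G χ v).2]
    simp [val]
  | or ψ χ ihψ ihχ =>
    intro hmem ℓ hc
    have hψm : ψ ∈ subf φ0 :=
      subf_subset hmem (List.mem_cons_of_mem _ (List.mem_append_left _ (self_mem_subf ψ)))
    have hχm : χ ∈ subf φ0 :=
      subf_subset hmem (List.mem_cons_of_mem _ (List.mem_append_right _ (self_mem_subf χ)))
    have hM : max (cost ψ) (cost χ) ≤ ℓ := Nat.succ_le_succ_iff.mp hc
    have h1 : 1 ≤ ℓ := le_trans ((one_le_cost ψ).trans (le_max_left _ _)) hM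
    obtain ⟨n, rfl⟩ : ∃ n, ℓ = n + 1 := ⟨ℓ - 1, by omega⟩
    have hcψ : cost ψ ≤ n + 1 := (le_max_left _ _).trans hM
    have hcχ : cost χ ≤ n + 1 := (le_max_right _ _).trans hM
    intro v
    rw [feat_succ_succ]
    simp only [CI, Cmain, AI, Amain, bI, bmain, mul_zero, Finset.sum_const_zero, add_zero,
      mul_add, Finset.sum_add_distrib, sum_dl]
    rw [cM_eq φ0 hψm, cM_eq φ0 hχm, ihψ hψm n hcψ v, ihχ hχm n hcχ v]
    rw [reluStar_of_nonneg (by linarith [(val_bounds G ψ v).1, (val_bounds G χ v).1])]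
    simp [val]
  | dia ψ ihψ =>
    intro hmem ℓ hc
    have hψm : ψ ∈ subf φ0 :=
      subf_subset hmem (List.mem_cons_of_mem _ (self_mem_subf ψ))
    have hM : cost ψ ≤ ℓ := Nat.succ_le_succ_iff.mp hc
    have h1 : 1 ≤ ℓ := (one_le_cost ψ).trans hM
    obtain ⟨n, rfl⟩ : ∃ n, ℓ = n + 1 := ⟨ℓ - 1, by omega⟩
    intro v
    rw [feat_succ_succ]
    simp only [CI, Cmain, AI, Amain, bI, bmain, mul_zero, Finset.sum_const_zero, zero_add,
      add_zero, sum_dl]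
    rw [cM_eq φ0 hψm]
    rw [show (∑ u ∈ G.nbhdFinset v,
          (mkGNN φ0 m ci str thr).feat Agg.mean G (n+1) u
            ((eI φ0).symm (Sum.inr (⟨ψ, hψm⟩, false))))
        = ∑ u ∈ G.nbhdFinset v, val G ψ u from
      Finset.sum_congr rfl fun u _ => ihψ hψm n hM u]
    have hb := mean_bounds (G.nbhdFinset v) (val G ψ) (fun u _ => val_bounds G ψ u)
    rw [reluStar_of_mem hb.1 hb.2]
    simp [val]

lemma neg_correct (ℓ : ℕ) (hc : cost φ0 ≤ ℓ + 1) (v : G.V) :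
    (mkGNN φ0 m ci str thr).feat Agg.mean G (ℓ+1+1) v ((eI φ0).symm (Sum.inl true))
      = 1 - val G φ0 v := by
  rw [feat_succ_succ]
  simp only [CI, AI, bI, mul_zero, Finset.sum_const_zero, add_zero, mul_sub,
    Finset.sum_sub_distrib, sum_dl]
  rw [const_correct φ0 m ci str thr G ℓ v, cM_eq φ0 (self_mem_subf φ0),
    main_correct φ0 m ci str thr G φ0 (self_mem_subf φ0) ℓ hc v]
  exact reluStar_of_mem (by linarith [(val_bounds G φ0 v).2]) (by linarith [(val_bounds G φ0 v).1])


end FeatLemmas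

end Construction

def dual : AFML2 α → AFML1 α
  | .atom P => .natom P
  | .natom P => .atom P
  | .diaTop => .boxBot
  | .and ψ χ => .or (dual ψ) (dual χ)
  | .or ψ χ => .and (dual ψ) (dual χ)
  | .box ψ => .dia (dual ψ)

lemma dual_sat (G : LabeledGraph α) (θ : AFML2 α) :
    ∀ v, AFML1.sat G (dual θ) v ↔ ¬ AFML2.sat G θ v := by
  induction θ with
  | atom P => intro v; simp [dual, AFML1.sat, AFML2.sat]
  | natom P => intro v; simp [dual, AFML1.sat, AFML2.sat]
  | diaTop => intro v; simp [dual, AFML1.sat, AFML2.sat]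
  | and ψ χ ih1 ih2 =>
    intro v
    simp only [dual, AFML1.sat, AFML2.sat, ih1 v, ih2 v]
    tauto
  | or ψ χ ih1 ih2 => intro v; simp [dual, AFML1.sat, AFML2.sat, ih1 v, ih2 v, not_or]
  | box ψ ih =>
    intro v
    simp only [dual, AFML1.sat, AFML2.sat, ih, not_forall, exists_prop]

end Stmt17P

/-- For every AFML formula φ there exists a simple Mean-GNN with
truncated ReLU activation that accepts a pointed graph iff it satisfies φ
(uniformly). -/
theorem stmt17 {α : Type} [Fintype α] (φ : AFML α) :
    ∃ 𝒢 : GNN α, 𝒢.IsSimple reluStar ∧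
      ∀ (G : LabeledGraph α) (v : G.V), (𝒢.accepts Agg.mean G v ↔ AFML.sat G φ v) := by

  classical
  cases φ with
  | inl ψ =>
    refine ⟨Stmt17P.mkGNN ψ (Stmt17P.cost ψ - 1) (Stmt17P.cM ψ ψ) true 0,
      Stmt17P.mkGNN_simple ψ _ _ _ _, fun G v => ?_⟩
    have hacc : (Stmt17P.mkGNN ψ (Stmt17P.cost ψ - 1) (Stmt17P.cM ψ ψ) true 0).accepts
          Agg.mean G v
        = ((0:ℝ) < (Stmt17P.mkGNN ψ (Stmt17P.cost ψ - 1) (Stmt17P.cM ψ ψ) true 0).feat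
            Agg.mean G ((Stmt17P.cost ψ - 1) + 1) v
            ((Stmt17P.eI ψ).symm (Stmt17P.cM ψ ψ))) := rfl
    rw [hacc, Stmt17P.cM_eq ψ (Stmt17P.self_mem_subf ψ),
      Stmt17P.main_correct ψ _ _ _ _ G ψ (Stmt17P.self_mem_subf ψ) (Stmt17P.cost ψ - 1)
        (by have := Stmt17P.one_le_cost ψ; omega) v]
    exact Stmt17P.val_pos_iff G ψ v
  | inr θ =>
    refine ⟨Stmt17P.mkGNN (Stmt17P.dual θ) ((Stmt17P.cost (Stmt17P.dual θ) - 1) + 1)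
      (Sum.inl true) false 1,
      Stmt17P.mkGNN_simple _ _ _ _ _, fun G v => ?_⟩
    have hacc : (Stmt17P.mkGNN (Stmt17P.dual θ) ((Stmt17P.cost (Stmt17P.dual θ) - 1) + 1)
          (Sum.inl true) false 1).accepts Agg.mean G v
        = ((1:ℝ) ≤ (Stmt17P.mkGNN (Stmt17P.dual θ) ((Stmt17P.cost (Stmt17P.dual θ) - 1) + 1)
            (Sum.inl true) false 1).feat Agg.mean G ((Stmt17P.cost (Stmt17P.dual θ) - 1) + 1 + 1)
            v ((Stmt17P.eI (Stmt17P.dual θ)).symm (Sum.inl true))) := rfl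
    rw [hacc, Stmt17P.neg_correct (Stmt17P.dual θ) _ _ _ _ G (Stmt17P.cost (Stmt17P.dual θ) - 1)
      (by have := Stmt17P.one_le_cost (Stmt17P.dual θ); omega) v]
    have hv := Stmt17P.val_pos_iff G (Stmt17P.dual θ) v
    have hb := Stmt17P.val_bounds G (Stmt17P.dual θ) v
    have hd := Stmt17P.dual_sat G θ v
    constructor
    · intro h
      by_contra hns
      have hsat : AFML1.sat G (Stmt17P.dual θ) v := hd.mpr hns
      have := hv.mpr hsat
      linarith
    · intro h
      have hnsat : ¬ AFML1.sat G (Stmt17P.dual θ) v := fun hs => (hd.mp hs) h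
      have hnp : ¬ (0 < Stmt17P.val G (Stmt17P.dual θ) v) := fun hp => hnsat (hv.mp hp)
      have hz : Stmt17P.val G (Stmt17P.dual θ) v = 0 := le_antisymm (not_lt.mp hnp) hb.1
      linarith
end

section
/- Let Π = {P1, P2} and let 𝒫 be the vertex property consisting of all pointed Π-labeled graphs (G,v) such that |{u ∈ N(G,v) : P1 ∈ π(u)}| > |{u ∈ N(G,v) : P2 ∈ π(u)}|. Then: (a) no RML formula defines 𝒫; and (b) there is a simple Mean-GNN with identity activation function (in particular, a Mean-GNN with continuous combination functions) that defines 𝒫. -/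
open scoped Classical

/-- The vertex property 'there exist more successors satisfying P1 than successors
satisfying P2', over Π = {P1, P2} (with P1 = 0, P2 = 1). -/
def moreP1thanP2 (G : LabeledGraph (Fin 2)) (v : G.V) : Prop :=
  {u | G.adj v u ∧ G.label u 1}.ncard < {u | G.adj v u ∧ G.label u 0}.ncard

lemma ncard_option {W : Type} [Fintype W] (P : Option W → Prop) :
    {u : Option W | u ≠ none ∧ P u}.ncard = {x : W | P (some x)}.ncard := by
  have h : {u : Option W | u ≠ none ∧ P u} = some '' {x : W | P (some x)} := by
    ext u
    cases u with
    | none => simp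
    | some x => simp
  rw [h, Set.ncard_image_of_injective _ (Option.some_injective W)]

lemma ncard_sum {A B : Type} [Fintype A] [Fintype B] (P : A ⊕ B → Prop) :
    {x : A ⊕ B | P x}.ncard
      = {a : A | P (Sum.inl a)}.ncard + {b : B | P (Sum.inr b)}.ncard := by
  have h : {x : A ⊕ B | P x}
      = Sum.inl '' {a : A | P (Sum.inl a)} ∪ Sum.inr '' {b : B | P (Sum.inr b)} := by
    ext x
    cases x with
    | inl a => simp
    | inr b => simp
  rw [h, Set.ncard_union_eq, Set.ncard_image_of_injective _ Sum.inl_injective,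
    Set.ncard_image_of_injective _ Sum.inr_injective]
  · exact Set.disjoint_left.2 (by rintro _ ⟨a, _, rfl⟩ ⟨b, _, h⟩; exact Sum.inl_ne_inr h.symm)

lemma ncard_const {A : Type} [Fintype A] (c : Prop) :
    {_a : A | c}.ncard = if c then Fintype.card A else 0 := by
  by_cases h : c
  · simp [h, Set.ncard_univ, Nat.card_eq_fintype_card]
  · simp [h]
/-- Star graph: root `none` with `p` leaves labeled {P1}, `q` leaves labeled {P2},
`s` leaves labeled {P1,P2}. -/
def starG (p q s : ℕ) : LabeledGraph (Fin 2) where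
  V := Option (Fin p ⊕ Fin q ⊕ Fin s)
  adj := fun v u => v = none ∧ u ≠ none
  label := fun v i =>
    match v with
    | none => False
    | some (Sum.inl _) => i = 0
    | some (Sum.inr (Sum.inl _)) => i = 1
    | some (Sum.inr (Sum.inr _)) => True

/-- Truth value of an RML formula at a leaf of type t (0 = {P1}, 1 = {P2}, 2 = {P1,P2}). -/
def leafSat : RML (Fin 2) → Fin 3 → Prop
  | .atom i, t => (t = 0 ∧ i = 0) ∨ (t = 1 ∧ i = 1) ∨ t = 2
  | .neg φ, t => ¬ leafSat φ t
  | .or φ ψ, t => leafSat φ t ∨ leafSat ψ t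
  | .diaGe _ _, _ => True
  | .diaGt _ _, _ => False

lemma starG_leaf_nbhd (p q s : ℕ) (x : Fin p ⊕ Fin q ⊕ Fin s) :
    (starG p q s).nbhd (some x) = ∅ := by
  ext u; simp [LabeledGraph.nbhd, starG]
  exact Iff.rfl

/-- The type of a leaf. -/
def leafType {p q s : ℕ} : Fin p ⊕ Fin q ⊕ Fin s → Fin 3
  | Sum.inl _ => 0
  | Sum.inr (Sum.inl _) => 1
  | Sum.inr (Sum.inr _) => 2

lemma starG_leaf_sat (p q s : ℕ) (φ : RML (Fin 2)) (x : Fin p ⊕ Fin q ⊕ Fin s) :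
    RML.sat (starG p q s) φ (some x) ↔ leafSat φ (leafType x) := by
  induction φ with
  | atom i =>
      rcases x with a | b | c <;>
        simp [RML.sat, leafSat, leafType, starG]
  | neg φ ih => simp [RML.sat, leafSat, ih]
  | or φ ψ ih1 ih2 => simp [RML.sat, leafSat, ih1, ih2]
  | diaGe r φ ih =>
      simp [RML.sat, leafSat, starG_leaf_nbhd]
  | diaGt r φ ih =>
      simp [RML.sat, leafSat, starG_leaf_nbhd]

lemma starG_root_nbhd_ncard (p q s : ℕ) :
    ((starG p q s).nbhd none).ncard = p + (q + s) := by
  have h : (starG p q s).nbhd none = {u : Option (Fin p ⊕ Fin q ⊕ Fin s) | u ≠ none ∧ True} := by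
    ext u; simp [LabeledGraph.nbhd, starG]
  rw [h]
  show Set.ncard {u : Option (Fin p ⊕ Fin q ⊕ Fin s) | u ≠ none ∧ True} = _
  rw [ncard_option, ncard_sum, ncard_sum]
  simp [Set.ncard_univ, Nat.card_eq_fintype_card]

lemma starG_count (p q s : ℕ) (P : Option (Fin p ⊕ Fin q ⊕ Fin s) → Prop)
    (a b c : Prop)
    (ha : ∀ i : Fin p, P (some (Sum.inl i)) ↔ a)
    (hb : ∀ i : Fin q, P (some (Sum.inr (Sum.inl i))) ↔ b)
    (hc : ∀ i : Fin s, P (some (Sum.inr (Sum.inr i))) ↔ c) :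
    {u | (starG p q s).adj none u ∧ P u}.ncard
      = (if a then p else 0) + ((if b then q else 0) + (if c then s else 0)) := by
  have h : {u | (starG p q s).adj none u ∧ P u}
      = {u : Option (Fin p ⊕ Fin q ⊕ Fin s) | u ≠ none ∧ P u} := by
    ext u; simp [starG]
  rw [h]
  show Set.ncard {u : Option (Fin p ⊕ Fin q ⊕ Fin s) | u ≠ none ∧ P u} = _
  rw [ncard_option, ncard_sum, ncard_sum]
  have h1 : {i : Fin p | P (some (Sum.inl i))} = {_i : Fin p | a} := by ext i; simp [ha]
  have h2 : {i : Fin q | P (some (Sum.inr (Sum.inl i)))} = {_i : Fin q | b} := by ext i; simp [hb]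
  have h3 : {i : Fin s | P (some (Sum.inr (Sum.inr i)))} = {_i : Fin s | c} := by ext i; simp [hc]
  rw [h1, h2, h3, ncard_const, ncard_const, ncard_const]
  simp



lemma cmp_agree {r x y : ℝ} (hxy : x ≤ y) (h : r < x ∨ y < r) :
    ((r ≤ x ↔ r ≤ y) ∧ (r < x ↔ r < y)) := by
  rcases h with h | h
  · constructor <;> constructor <;> intro _ <;> linarith
  · constructor <;> constructor <;> intro h2 <;> linarith

-- numerators
noncomputable def numG (a b c : Prop) (k : ℕ) : ℝ :=
  (if a then (k:ℝ)+1 else 0) + ((if b then (k:ℝ) else 0) + (if c then (k:ℝ)*k else 0))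
noncomputable def numH (a b c : Prop) (k : ℕ) : ℝ :=
  (if a then (k:ℝ) else 0) + ((if b then (k:ℝ)+1 else 0) + (if c then (k:ℝ)*k else 0))

lemma pair_key (r : ℝ) (hr0 : 0 ≤ r) (hr1 : r ≤ 1) (c : Prop) :
    ∃ K : ℕ, ∀ k : ℕ, K ≤ k → 1 ≤ k →
      r < ((k:ℝ) + (if c then (k:ℝ)*k else 0)) / ((k:ℝ)+1)^2
      ∨ ((k:ℝ) + 1 + (if c then (k:ℝ)*k else 0)) / ((k:ℝ)+1)^2 < r := by
  by_cases hc : c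
  · simp only [if_pos hc]
    by_cases hr : r < 1
    · obtain ⟨n, hn⟩ := exists_nat_gt (1/(1-r))
      refine ⟨n, fun k hk h1 => Or.inl ?_⟩
      have hkpos : (0:ℝ) < (k:ℝ) + 1 := by positivity
      have hx : ((k:ℝ) + (k:ℝ)*k) / ((k:ℝ)+1)^2 = (k:ℝ)/((k:ℝ)+1) := by
        field_simp; ring
      rw [hx, lt_div_iff₀ hkpos]
      have hnk : (n:ℝ) ≤ k := Nat.cast_le.2 hk
      have h1r : 0 < 1 - r := by linarith
      have h2 : 1/(1-r) < (k:ℝ) + 1 := by linarith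
      have h3 : 1 < ((k:ℝ)+1) * (1-r) := by
        rw [div_lt_iff₀ h1r] at h2; linarith
      nlinarith
    · have hr' : r = 1 := le_antisymm hr1 (not_lt.1 hr)
      refine ⟨1, fun k hk h1 => Or.inr ?_⟩
      have hkpos : (0:ℝ) < ((k:ℝ)+1)^2 := by positivity
      rw [div_lt_iff₀ hkpos, hr']
      have h1' : (1:ℝ) ≤ (k:ℝ) := Nat.one_le_cast.2 h1
      nlinarith
  · simp only [if_neg hc]
    by_cases hr : 0 < r
    · obtain ⟨n, hn⟩ := exists_nat_gt (1/r)
      refine ⟨n, fun k hk h1 => Or.inr ?_⟩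
      have hkpos : (0:ℝ) < (k:ℝ) + 1 := by positivity
      have hy : ((k:ℝ) + 1 + 0) / ((k:ℝ)+1)^2 = 1/((k:ℝ)+1) := by
        field_simp; ring
      rw [hy, div_lt_iff₀ hkpos]
      have hnk : (n:ℝ) ≤ k := Nat.cast_le.2 hk
      have h2 : 1/r < (k:ℝ) + 1 := by linarith
      rw [div_lt_iff₀ hr] at h2
      linarith
    · have hr' : r = 0 := le_antisymm (not_lt.1 hr) hr0
      refine ⟨1, fun k hk h1 => Or.inl ?_⟩
      rw [hr']
      have h1' : (1:ℝ) ≤ (k:ℝ) := Nat.one_le_cast.2 h1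
      positivity

lemma frac_key (r : ℝ) (hr0 : 0 ≤ r) (hr1 : r ≤ 1) (a b c : Prop) :
    ∃ K : ℕ, ∀ k : ℕ, K ≤ k → 1 ≤ k →
      ((r ≤ numG a b c k / ((k:ℝ)+1)^2 ↔ r ≤ numH a b c k / ((k:ℝ)+1)^2)
        ∧ (r < numG a b c k / ((k:ℝ)+1)^2 ↔ r < numH a b c k / ((k:ℝ)+1)^2)) := by
  by_cases ha : a <;> by_cases hb : b
  · -- both: numerators equal
    refine ⟨1, fun k hk h1 => ?_⟩
    have : numG a b c k = numH a b c k := by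
      simp only [numG, numH, if_pos ha, if_pos hb]; ring
    rw [this]; exact ⟨Iff.rfl, Iff.rfl⟩
  · -- a, ¬b : numH ≤ numG, pair (numH, numG) = (k + itec, k+1+itec)
    obtain ⟨K, hK⟩ := pair_key r hr0 hr1 c
    refine ⟨K, fun k hk h1 => ?_⟩
    have hG : numG a b c k = ((k:ℝ) + 1 + (if c then (k:ℝ)*k else 0)) := by
      simp only [numG, if_pos ha, if_neg hb]; ring
    have hH : numH a b c k = ((k:ℝ) + (if c then (k:ℝ)*k else 0)) := by
      simp only [numH, if_pos ha, if_neg hb]; ring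
    rw [hG, hH]
    have hd : (0:ℝ) < ((k:ℝ)+1)^2 := by positivity
    have hxy : ((k:ℝ) + (if c then (k:ℝ)*k else 0)) / ((k:ℝ)+1)^2
        ≤ ((k:ℝ) + 1 + (if c then (k:ℝ)*k else 0)) / ((k:ℝ)+1)^2 := by
      gcongr
      linarith
    have h2 := cmp_agree hxy (hK k hk h1)
    exact ⟨h2.1.symm, h2.2.symm⟩
  · -- ¬a, b
    obtain ⟨K, hK⟩ := pair_key r hr0 hr1 c
    refine ⟨K, fun k hk h1 => ?_⟩
    have hG : numG a b c k = ((k:ℝ) + (if c then (k:ℝ)*k else 0)) := by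
      simp only [numG, if_neg ha, if_pos hb]; ring
    have hH : numH a b c k = ((k:ℝ) + 1 + (if c then (k:ℝ)*k else 0)) := by
      simp only [numH, if_neg ha, if_pos hb]; ring
    rw [hG, hH]
    have hd : (0:ℝ) < ((k:ℝ)+1)^2 := by positivity
    have hxy : ((k:ℝ) + (if c then (k:ℝ)*k else 0)) / ((k:ℝ)+1)^2
        ≤ ((k:ℝ) + 1 + (if c then (k:ℝ)*k else 0)) / ((k:ℝ)+1)^2 := by
      gcongr
      linarith
    exact cmp_agree hxy (hK k hk h1)
  · -- neither
    refine ⟨1, fun k hk h1 => ?_⟩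
    have : numG a b c k = numH a b c k := by
      simp only [numG, numH, if_neg ha, if_neg hb]
    rw [this]; exact ⟨Iff.rfl, Iff.rfl⟩

lemma starG_dia_count (p q s : ℕ) (ψ : RML (Fin 2)) :
    {u | (starG p q s).adj none u ∧ RML.sat (starG p q s) ψ u}.ncard
      = (if leafSat ψ 0 then p else 0)
        + ((if leafSat ψ 1 then q else 0) + (if leafSat ψ 2 then s else 0)) :=
  starG_count p q s _ _ _ _
    (fun i => starG_leaf_sat p q s ψ (Sum.inl i))
    (fun i => starG_leaf_sat p q s ψ (Sum.inr (Sum.inl i)))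
    (fun i => starG_leaf_sat p q s ψ (Sum.inr (Sum.inr i)))

lemma starG_nonempty (p q s : ℕ) (h : 0 < p) : ((starG p q s).nbhd none).Nonempty :=
  ⟨some (Sum.inl ⟨0, h⟩), by simp [LabeledGraph.nbhd, starG]; exact Option.some_ne_none _⟩

lemma castG (a b c : Prop) (k : ℕ) :
    (((if a then (k+1) else 0) + ((if b then k else 0) + (if c then k*k else 0)) : ℕ) : ℝ)
      = numG a b c k := by
  simp only [numG]
  by_cases ha : a <;> by_cases hb : b <;> by_cases hc : c <;> simp [ha, hb, hc] <;> push_cast <;> ring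

lemma castH (a b c : Prop) (k : ℕ) :
    (((if a then k else 0) + ((if b then (k+1) else 0) + (if c then k*k else 0)) : ℕ) : ℝ)
      = numH a b c k := by
  simp only [numH]
  by_cases ha : a <;> by_cases hb : b <;> by_cases hc : c <;> simp [ha, hb, hc] <;> push_cast <;> ring

lemma castDen (k : ℕ) : (((k+1) + (k + k*k) : ℕ) : ℝ) = ((k:ℝ)+1)^2 := by
  push_cast; ring

lemma castDenH (k : ℕ) : ((k + ((k+1) + k*k) : ℕ) : ℝ) = ((k:ℝ)+1)^2 := by
  push_cast; ring

lemma main_ind (φ : RML (Fin 2)) :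
    ∃ K : ℕ, ∀ k : ℕ, K ≤ k → 1 ≤ k →
      (RML.sat (starG (k+1) k (k*k)) φ none ↔ RML.sat (starG k (k+1) (k*k)) φ none) := by
  induction φ with
  | atom i => exact ⟨0, fun k _ _ => by simp [RML.sat, starG]⟩
  | neg φ ih =>
      obtain ⟨K, hK⟩ := ih
      exact ⟨K, fun k hk h1 => not_congr (hK k hk h1)⟩
  | or φ ψ ih1 ih2 =>
      obtain ⟨K1, hK1⟩ := ih1
      obtain ⟨K2, hK2⟩ := ih2
      exact ⟨max K1 K2, fun k hk h1 =>
        or_congr (hK1 k (le_trans (le_max_left _ _) hk) h1)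
          (hK2 k (le_trans (le_max_right _ _) hk) h1)⟩
  | diaGe r ψ ih =>
      obtain ⟨K, hK⟩ := frac_key r.1 r.2.1 r.2.2 (leafSat ψ 0) (leafSat ψ 1) (leafSat ψ 2)
      refine ⟨K, fun k hk h1 => ?_⟩
      have hneG := starG_nonempty (k+1) k (k*k) (Nat.succ_pos k)
      have hneH := starG_nonempty k (k+1) (k*k) h1
      show ((starG (k+1) k (k*k)).nbhd none).Nonempty → _ ↔ (((starG k (k+1) (k*k)).nbhd none).Nonempty → _)
      rw [iff_true_intro hneG, iff_true_intro hneH, true_imp_iff, true_imp_iff,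
        starG_dia_count, starG_dia_count, starG_root_nbhd_ncard, starG_root_nbhd_ncard,
        castG, castH, castDen, castDenH]
      exact (hK k hk h1).1
  | diaGt r ψ ih =>
      obtain ⟨K, hK⟩ := frac_key r.1 r.2.1 r.2.2 (leafSat ψ 0) (leafSat ψ 1) (leafSat ψ 2)
      refine ⟨K, fun k hk h1 => ?_⟩
      have hneG := starG_nonempty (k+1) k (k*k) (Nat.succ_pos k)
      have hneH := starG_nonempty k (k+1) (k*k) h1
      show ((starG (k+1) k (k*k)).nbhd none).Nonempty ∧ _ ↔ (((starG k (k+1) (k*k)).nbhd none).Nonempty ∧ _)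
      rw [iff_true_intro hneG, iff_true_intro hneH, true_and, true_and,
        starG_dia_count, starG_dia_count, starG_root_nbhd_ncard, starG_root_nbhd_ncard,
        castG, castH, castDen, castDenH]
      exact (hK k hk h1).2

lemma more_starG (p q s : ℕ) : moreP1thanP2 (starG p q s) none ↔ q + s < p + s := by
  unfold moreP1thanP2
  rw [starG_count p q s (fun u => (starG p q s).label u 1) False True True
      (fun i => by simp [starG]) (fun i => by simp [starG]) (fun i => by simp [starG]),
    starG_count p q s (fun u => (starG p q s).label u 0) True False True
      (fun i => by simp [starG]) (fun i => by simp [starG]) (fun i => by simp [starG])]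
  simp

lemma part_a : ¬ ∃ φ : RML (Fin 2), ∀ (G : LabeledGraph (Fin 2)) (v : G.V),
    RML.sat G φ v ↔ moreP1thanP2 G v := by
  rintro ⟨φ, hφ⟩
  obtain ⟨K, hK⟩ := main_ind φ
  set k := K + 1 with hk
  have hmG : moreP1thanP2 (starG (k+1) k (k*k)) none := by
    rw [more_starG]; omega
  have hmH : ¬ moreP1thanP2 (starG k (k+1) (k*k)) none := by
    rw [more_starG]; omega
  exact hmH ((hφ (starG k (k+1) (k*k)) none).1 ((hK k (by omega) (by omega)).1 ((hφ (starG (k+1) k (k*k)) none).2 hmG)))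

lemma h2card : 2 = Fintype.card (Fin 2) := (Fintype.card_fin 2).symm

/-- The bijection from feature indices to labels used at layer 0. -/
noncomputable def gEquiv : Fin 2 ≃ Fin 2 :=
  (finCongr h2card).trans (Fintype.equivFin (Fin 2)).symm

noncomputable def myGNN : GNN (Fin 2) where
  L := 1
  δ := fun ℓ => match ℓ with | 0 => 2 | _+1 => 1
  hδ0 := h2card
  com := fun ℓ => match ℓ with
    | 0 => fun _xv xa _i => ∑ j : Fin 2, xa j * (if gEquiv j = 0 then (1:ℝ) else -1)
    | _+1 => fun _ _ _ => 0
  clsIdx := (0 : Fin 1)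
  clsStrict := true
  clsThr := 0

lemma myGNN_simple : myGNN.IsSimple (fun x => x) := by
  intro ℓ hℓ
  have hℓ1 : ℓ < 1 := hℓ
  obtain rfl : ℓ = 0 := by omega
  refine ⟨fun _ _ => 0, fun j _ => if gEquiv j = 0 then (1:ℝ) else -1, fun _ => 0, ?_⟩
  intro xv xa i
  show (∑ j : Fin 2, xa j * (if gEquiv j = 0 then (1:ℝ) else -1)) = _
  simp only [mul_zero, Finset.sum_const_zero, zero_add, add_zero]
  rfl

lemma myGNN_feat0 (G : LabeledGraph (Fin 2)) (v : G.V) (j : Fin 2) :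
    myGNN.feat Agg.mean G 0 v j = if G.label v (gEquiv j) then 1 else 0 := rfl

lemma myGNN_feat1 (G : LabeledGraph (Fin 2)) (v : G.V) (i : Fin 1) :
    myGNN.feat Agg.mean G 1 v i
      = ((G.nbhdFinset v).filter (fun u => G.label u 0)).card / ((G.nbhdFinset v).card : ℝ)
        - ((G.nbhdFinset v).filter (fun u => G.label u 1)).card / ((G.nbhdFinset v).card : ℝ) := by
  show (∑ j : Fin 2, Agg.apply Agg.mean (G.nbhdFinset v)
      (fun u => myGNN.feat Agg.mean G 0 u j) * (if gEquiv j = 0 then (1:ℝ) else -1)) = _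
  have key : ∀ j : Fin 2, Agg.apply Agg.mean (G.nbhdFinset v)
      (fun u => myGNN.feat Agg.mean G 0 u j)
      = ((G.nbhdFinset v).filter (fun u => G.label u (gEquiv j))).card / ((G.nbhdFinset v).card : ℝ) := by
    intro j
    show (∑ u ∈ G.nbhdFinset v, myGNN.feat Agg.mean G 0 u j) / _ = _
    rw [Finset.sum_congr rfl (fun u _ => myGNN_feat0 G u j), Finset.sum_boole]
  rw [Finset.sum_congr rfl (fun j _ => by rw [key j])]
  rw [← Equiv.sum_comp gEquiv.symm
    (fun j => (((G.nbhdFinset v).filter (fun u => G.label u (gEquiv j))).card : ℝ)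
      / ((G.nbhdFinset v).card : ℝ) * (if gEquiv j = 0 then (1:ℝ) else -1))]
  simp only [Equiv.apply_symm_apply]
  rw [Fin.sum_univ_two]
  norm_num
  ring

lemma ncard_filter_eq (G : LabeledGraph (Fin 2)) (v : G.V) (i : Fin 2) :
    {u | G.adj v u ∧ G.label u i}.ncard
      = ((G.nbhdFinset v).filter (fun u => G.label u i)).card := by
  rw [LabeledGraph.nbhdFinset, Finset.filter_filter, ← Set.ncard_coe_finset]
  congr 1
  ext u
  simp

lemma myGNN_accepts (G : LabeledGraph (Fin 2)) (v : G.V) :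
    myGNN.accepts Agg.mean G v ↔ moreP1thanP2 G v := by
  have hacc : myGNN.accepts Agg.mean G v ↔
      0 < myGNN.feat Agg.mean G 1 v (0 : Fin 1) := Iff.rfl
  rw [hacc, myGNN_feat1]
  unfold moreP1thanP2
  rw [ncard_filter_eq, ncard_filter_eq]
  set n := (G.nbhdFinset v).card with hn
  set c0 := ((G.nbhdFinset v).filter (fun u => G.label u 0)).card with hc0
  set c1 := ((G.nbhdFinset v).filter (fun u => G.label u 1)).card with hc1
  rcases Nat.eq_zero_or_pos n with h0 | hpos
  · have hemp : G.nbhdFinset v = ∅ := Finset.card_eq_zero.1 h0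
    have hc0' : c0 = 0 := by rw [hc0, hemp]; simp
    have hc1' : c1 = 0 := by rw [hc1, hemp]; simp
    rw [h0, hc0', hc1']
    norm_num
  · have hnpos : (0:ℝ) < (n:ℝ) := by exact_mod_cast hpos
    rw [sub_pos, div_lt_div_iff_of_pos_right hnpos]
    exact ⟨fun h => by exact_mod_cast h, fun h => by exact_mod_cast h⟩

/-- (a) no RML formula defines the property 'more successors satisfy
P1 than P2'; (b) a simple Mean-GNN with identity activation (hence with continuous
combination functions) defines it. -/
theorem stmt18 :
    (¬ ∃ φ : RML (Fin 2), ∀ (G : LabeledGraph (Fin 2)) (v : G.V),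
        RML.sat G φ v ↔ moreP1thanP2 G v) ∧
    (∃ 𝒢 : GNN (Fin 2), 𝒢.IsSimple (fun x => x) ∧
        ∀ (G : LabeledGraph (Fin 2)) (v : G.V),
          𝒢.accepts Agg.mean G v ↔ moreP1thanP2 G v) := by
  exact ⟨part_a, ⟨myGNN, myGNN_simple, myGNN_accepts⟩⟩
end

section
/- Let Π = {P}. There is no Mean-GNN all of whose combination functions are continuous that accepts a pointed Π-labeled graph (G,v) if and only if G,v ⊨ ◊^{>1/2}◊^{>1/2}P. That is, the RML formula ◊^{>1/2}◊^{>1/2}P is not expressible by any Mean-GNN with continuous combination functions. -/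
open scoped Classical

namespace S19
open Filter Topology

/-! ### Feature functions of the GNN -/

section Feats
variable (𝒢 : GNN (Fin 1))

/-- feature of a `P`-labeled leaf -/
noncomputable def Pv : (ℓ : ℕ) → Fin (𝒢.δ ℓ) → ℝ
  | 0 => fun _ => 1
  | (ℓ+1) => 𝒢.com ℓ (Pv ℓ) 0

/-- feature of an unlabeled leaf -/
noncomputable def Qv : (ℓ : ℕ) → Fin (𝒢.δ ℓ) → ℝ
  | 0 => fun _ => 0
  | (ℓ+1) => 𝒢.com ℓ (Qv ℓ) 0

/-- feature of an unlabeled vertex whose children are a fraction `ρ` of `P`-leaves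
and a fraction `1-ρ` of unlabeled leaves -/
noncomputable def chF (ρ : ℝ) : (ℓ : ℕ) → Fin (𝒢.δ ℓ) → ℝ
  | 0 => fun _ => 0
  | (ℓ+1) => 𝒢.com ℓ (chF ρ ℓ) (fun k => ρ * Pv 𝒢 ℓ k + (1 - ρ) * Qv 𝒢 ℓ k)

/-- the finite-dimensional space housing the truncated mean vectors -/
abbrev Efin := (ℓ : Fin 𝒢.L) → Fin (𝒢.δ ℓ) → ℝ

/-- feature of an unlabeled root whose children have mean feature vector `m` -/
noncomputable def rootF (m : Efin 𝒢) : (ℓ : ℕ) → Fin (𝒢.δ ℓ) → ℝ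
  | 0 => fun _ => 0
  | (ℓ+1) => 𝒢.com ℓ (rootF m ℓ) (if h : ℓ < 𝒢.L then m ⟨ℓ, h⟩ else fun _ => 0)

/-- final output value at the root -/
noncomputable def Yv (m : Efin 𝒢) : ℝ := rootF 𝒢 m 𝒢.L 𝒢.clsIdx

lemma cont_chF (hc : 𝒢.HasContinuousCom) : ∀ ℓ, ℓ ≤ 𝒢.L → Continuous (fun ρ => chF 𝒢 ρ ℓ)
  | 0, _ => continuous_const
  | (ℓ+1), h => by
    have h1 : Continuous (fun ρ => chF 𝒢 ρ ℓ) := cont_chF hc ℓ (Nat.le_of_succ_le h)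
    have h2 : Continuous (fun ρ : ℝ => fun k => ρ * Pv 𝒢 ℓ k + (1 - ρ) * Qv 𝒢 ℓ k) := by
      refine continuous_pi fun k => ?_
      continuity
    exact (hc ℓ h).comp (h1.prodMk h2)

lemma cont_rootF (hc : 𝒢.HasContinuousCom) :
    ∀ ℓ, ℓ ≤ 𝒢.L → Continuous (fun m : Efin 𝒢 => rootF 𝒢 m ℓ)
  | 0, _ => continuous_const
  | (ℓ+1), h => by
    have h1 : Continuous (fun m : Efin 𝒢 => rootF 𝒢 m ℓ) := cont_rootF hc ℓ (Nat.le_of_succ_le h)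
    have hl : ℓ < 𝒢.L := h
    have h2 : Continuous (fun m : Efin 𝒢 => m ⟨ℓ, hl⟩) := continuous_apply _
    have : Continuous (fun m : Efin 𝒢 => 𝒢.com ℓ (rootF 𝒢 m ℓ) (m ⟨ℓ, hl⟩)) :=
      (hc ℓ hl).comp (h1.prodMk h2)
    refine this.congr fun m => ?_
    show 𝒢.com ℓ (rootF 𝒢 m ℓ) (m ⟨ℓ, hl⟩) =
      𝒢.com ℓ (rootF 𝒢 m ℓ) (if h : ℓ < 𝒢.L then m ⟨ℓ, h⟩ else fun _ => 0)
    rw [dif_pos hl]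

lemma cont_Yv (hc : 𝒢.HasContinuousCom) : Continuous (Yv 𝒢) := by
  have := cont_rootF 𝒢 hc 𝒢.L le_rfl
  exact (continuous_apply 𝒢.clsIdx).comp this

end Feats

end S19
namespace S19

/-! ### The configuration graphs -/

section Graphs
variable (ι : Type) [Fintype ι] (num den : ι → ℕ)

/-- vertex type: a root, children indexed by `ι`, and for child `i`, `den i` leaves,
of which the first `num i` are labeled -/
abbrev Vt := Option (ι ⊕ (Σ i : ι, Fin (den i)))

def adjF : Vt ι den → Vt ι den → Prop
  | none, some (Sum.inl _) => True
  | some (Sum.inl i), some (Sum.inr ⟨i', _⟩) => i = i'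
  | _, _ => False

def labF : Vt ι den → Prop
  | some (Sum.inr ⟨i, j⟩) => (j : ℕ) < num i
  | _ => False

def cfg : LabeledGraph (Fin 1) where
  V := Vt ι den
  adj := adjF ι den
  label := fun x _ => labF ι num den x

def rt : (cfg ι num den).V := none
def ch (i : ι) : (cfg ι num den).V := some (Sum.inl i)
def lf (i : ι) (j : Fin (den i)) : (cfg ι num den).V := some (Sum.inr ⟨i, j⟩)

variable {ι num den}

lemma ch_inj : Function.Injective (ch ι num den) := fun a b h =>
  Sum.inl.inj (Option.some.inj h)

lemma lf_inj (i : ι) : Function.Injective (lf ι num den i) := by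
  intro a b h
  have h1 : (some (Sum.inr ⟨i, a⟩) : Vt ι den) = some (Sum.inr ⟨i, b⟩) := h
  injection h1 with h2
  injection h2 with h3
  exact sigma_mk_injective (β := fun x : ι => Fin (den x)) h3

lemma adj_rt_iff {u : (cfg ι num den).V} :
    (cfg ι num den).adj (rt ι num den) u ↔ ∃ i, u = ch ι num den i := by
  show adjF ι den none u ↔ ∃ i, u = (some (Sum.inl i) : Vt ι den)
  rcases u with _ | (i | ⟨i, j⟩)
  · exact iff_of_false not_false (by rintro ⟨i, h⟩; cases h)
  · exact iff_of_true trivial ⟨i, rfl⟩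
  · exact iff_of_false not_false (by rintro ⟨i', h⟩; cases h)

lemma adj_ch_iff {i : ι} {u : (cfg ι num den).V} :
    (cfg ι num den).adj (ch ι num den i) u ↔ ∃ j, u = lf ι num den i j := by
  show adjF ι den (some (Sum.inl i)) u ↔ ∃ j, u = (some (Sum.inr ⟨i, j⟩) : Vt ι den)
  rcases u with _ | (i' | ⟨i', j⟩)
  · exact iff_of_false not_false (by rintro ⟨j', h⟩; cases h)
  · exact iff_of_false not_false (by rintro ⟨j', h⟩; cases h)
  · show i = i' ↔ _
    constructor
    · rintro rfl
      exact ⟨j, rfl⟩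
    · rintro ⟨j', hj⟩
      have h2 : (⟨i', j⟩ : Σ a : ι, Fin (den a)) = ⟨i, j'⟩ := Sum.inr.inj (Option.some.inj hj)
      exact (Sigma.mk.inj_iff.mp h2).1.symm

lemma not_adj_lf {i : ι} {j : Fin (den i)} {u : (cfg ι num den).V} :
    ¬ (cfg ι num den).adj (lf ι num den i j) u := by
  show ¬ adjF ι den (some (Sum.inr ⟨i, j⟩)) u
  rcases u with _ | (i' | ⟨i', j'⟩) <;> exact not_false

lemma label_lf_iff {i : ι} {j : Fin (den i)} {p : Fin 1} :
    (cfg ι num den).label (lf ι num den i j) p ↔ (j : ℕ) < num i := Iff.rfl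

lemma label_rt {p : Fin 1} : ¬ (cfg ι num den).label (rt ι num den) p := not_false

lemma label_ch {i : ι} {p : Fin 1} : ¬ (cfg ι num den).label (ch ι num den i) p := not_false

lemma nbhd_rt : (cfg ι num den).nbhd (rt ι num den) = Set.range (ch ι num den) := by
  ext u
  simp only [LabeledGraph.nbhd, Set.mem_setOf_eq, Set.mem_range, adj_rt_iff]
  exact ⟨fun ⟨i, h⟩ => ⟨i, h.symm⟩, fun ⟨i, h⟩ => ⟨i, h.symm⟩⟩

lemma nbhd_ch {i : ι} : (cfg ι num den).nbhd (ch ι num den i) = Set.range (lf ι num den i) := by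
  ext u
  simp only [LabeledGraph.nbhd, Set.mem_setOf_eq, Set.mem_range, adj_ch_iff]
  exact ⟨fun ⟨j, h⟩ => ⟨j, h.symm⟩, fun ⟨j, h⟩ => ⟨j, h.symm⟩⟩

lemma nbhd_lf {i : ι} {j : Fin (den i)} : (cfg ι num den).nbhd (lf ι num den i j) = ∅ := by
  ext u
  simp only [LabeledGraph.nbhd, Set.mem_setOf_eq, Set.mem_empty_iff_false, iff_false]
  exact not_adj_lf

lemma nbhdFinset_rt :
    (cfg ι num den).nbhdFinset (rt ι num den) = Finset.univ.map ⟨ch ι num den, ch_inj⟩ := by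
  ext u
  simp only [LabeledGraph.nbhdFinset, Finset.mem_filter, Finset.mem_univ, true_and,
    Finset.mem_map, Function.Embedding.coeFn_mk, adj_rt_iff]
  exact ⟨fun ⟨i, h⟩ => ⟨i, h.symm⟩, fun ⟨i, h⟩ => ⟨i, h.symm⟩⟩

lemma nbhdFinset_ch {i : ι} :
    (cfg ι num den).nbhdFinset (ch ι num den i) =
      Finset.univ.map ⟨lf ι num den i, lf_inj i⟩ := by
  ext u
  simp only [LabeledGraph.nbhdFinset, Finset.mem_filter, Finset.mem_univ, true_and,
    Finset.mem_map, Function.Embedding.coeFn_mk, adj_ch_iff]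
  exact ⟨fun ⟨j, h⟩ => ⟨j, h.symm⟩, fun ⟨j, h⟩ => ⟨j, h.symm⟩⟩

lemma nbhdFinset_lf {i : ι} {j : Fin (den i)} :
    (cfg ι num den).nbhdFinset (lf ι num den i j) = ∅ := by
  ext u
  simp only [LabeledGraph.nbhdFinset, Finset.mem_filter, Finset.mem_univ, true_and,
    Finset.notMem_empty, iff_false]
  exact not_adj_lf

end Graphs

end S19
namespace S19

/-! ### Truth of the formula on configuration graphs -/

section Truth
variable {ι : Type} [Fintype ι] {num den : ι → ℕ}

lemma card_filter_lt (d n : ℕ) (h : n ≤ d) :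
    ((Finset.univ : Finset (Fin d)).filter fun j : Fin d => (j : ℕ) < n).card = n := by
  have himg : (((Finset.univ : Finset (Fin d)).filter fun j : Fin d => (j : ℕ) < n).image Fin.val)
      = Finset.range n := by
    ext k
    simp only [Finset.mem_image, Finset.mem_filter, Finset.mem_univ, true_and, Finset.mem_range]
    constructor
    · rintro ⟨j, hj, rfl⟩
      exact hj
    · intro hk
      exact ⟨⟨k, lt_of_lt_of_le hk h⟩, hk, rfl⟩
  calc ((Finset.univ : Finset (Fin d)).filter fun j : Fin d => (j : ℕ) < n).card
      = (((Finset.univ : Finset (Fin d)).filter fun j : Fin d => (j : ℕ) < n).image Fin.val).card :=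
        (Finset.card_image_of_injective _ Fin.val_injective).symm
    _ = n := by rw [himg, Finset.card_range]

lemma half_lt_div {g M : ℕ} (hM : 0 < M) : (1:ℝ)/2 < (g:ℝ)/(M:ℝ) ↔ M < 2*g := by
  rw [div_lt_div_iff₀ two_pos (by exact_mod_cast hM), one_mul]
  norm_cast
  omega

lemma half_coe : ((half : Set.Icc (0:ℝ) 1) : ℝ) = 1/2 := rfl

lemma ncard_nbhd_rt : ((cfg ι num den).nbhd (rt ι num den)).ncard = Fintype.card ι := by
  rw [nbhd_rt, ← Set.image_univ, Set.ncard_image_of_injective _ ch_inj, Set.ncard_univ,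
    Nat.card_eq_fintype_card]

lemma ncard_nbhd_ch {i : ι} : ((cfg ι num den).nbhd (ch ι num den i)).ncard = den i := by
  rw [nbhd_ch, ← Set.image_univ, Set.ncard_image_of_injective _ (lf_inj i), Set.ncard_univ,
    Nat.card_eq_fintype_card, Fintype.card_fin]

lemma sat_in_ch {i : ι} (hden : 0 < den i) (hnum : num i ≤ den i) :
    RML.sat (cfg ι num den) (RML.diaGt half (RML.atom 0)) (ch ι num den i) ↔
      den i < 2 * num i := by
  have hS : {u | (cfg ι num den).adj (ch ι num den i) u ∧
      RML.sat (cfg ι num den) (RML.atom 0) u} = lf ι num den i '' {j | (j : ℕ) < num i} := by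
    ext u
    simp only [Set.mem_setOf_eq, Set.mem_image]
    constructor
    · rintro ⟨hadj, hlab⟩
      obtain ⟨j, rfl⟩ := adj_ch_iff.mp hadj
      exact ⟨j, hlab, rfl⟩
    · rintro ⟨j, hj, rfl⟩
      exact ⟨adj_ch_iff.mpr ⟨j, rfl⟩, hj⟩
  have hSn : {u | (cfg ι num den).adj (ch ι num den i) u ∧
      RML.sat (cfg ι num den) (RML.atom 0) u}.ncard = num i := by
    rw [hS, Set.ncard_image_of_injective _ (lf_inj i), Set.ncard_eq_toFinset_card',
      Set.toFinset_setOf]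
    exact card_filter_lt _ _ hnum
  show ((cfg ι num den).nbhd (ch ι num den i)).Nonempty ∧
      ((half : Set.Icc (0:ℝ) 1) : ℝ) <
        (({u | (cfg ι num den).adj (ch ι num den i) u ∧
            RML.sat (cfg ι num den) (RML.atom 0) u}.ncard : ℝ) /
          (((cfg ι num den).nbhd (ch ι num den i)).ncard : ℝ)) ↔ _
  rw [hSn, ncard_nbhd_ch, half_coe]
  have hne : ((cfg ι num den).nbhd (ch ι num den i)).Nonempty := by
    rw [nbhd_ch]
    exact ⟨lf ι num den i ⟨0, hden⟩, Set.mem_range_self _⟩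
  rw [half_lt_div hden]
  exact ⟨fun h => h.2, fun h => ⟨hne, h⟩⟩

lemma sat_rt_iff [Nonempty ι] (hden : ∀ i, 0 < den i) (hnum : ∀ i, num i ≤ den i) :
    RML.sat (cfg ι num den) (RML.diaGt half (RML.diaGt half (RML.atom 0))) (rt ι num den) ↔
      Fintype.card ι < 2 * (Finset.univ.filter fun i => den i < 2 * num i).card := by
  have hS : {u | (cfg ι num den).adj (rt ι num den) u ∧
      RML.sat (cfg ι num den) (RML.diaGt half (RML.atom 0)) u}
      = ch ι num den '' {i | den i < 2 * num i} := by
    ext u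
    simp only [Set.mem_setOf_eq, Set.mem_image]
    constructor
    · rintro ⟨hadj, hsat⟩
      obtain ⟨i, rfl⟩ := adj_rt_iff.mp hadj
      exact ⟨i, (sat_in_ch (hden i) (hnum i)).mp hsat, rfl⟩
    · rintro ⟨i, hi, rfl⟩
      exact ⟨adj_rt_iff.mpr ⟨i, rfl⟩, (sat_in_ch (hden i) (hnum i)).mpr hi⟩
  have hSn : {u | (cfg ι num den).adj (rt ι num den) u ∧
      RML.sat (cfg ι num den) (RML.diaGt half (RML.atom 0)) u}.ncard
      = (Finset.univ.filter fun i => den i < 2 * num i).card := by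
    rw [hS, Set.ncard_image_of_injective _ ch_inj, Set.ncard_eq_toFinset_card',
      Set.toFinset_setOf]
  show ((cfg ι num den).nbhd (rt ι num den)).Nonempty ∧
      ((half : Set.Icc (0:ℝ) 1) : ℝ) <
        (({u | (cfg ι num den).adj (rt ι num den) u ∧
            RML.sat (cfg ι num den) (RML.diaGt half (RML.atom 0)) u}.ncard : ℝ) /
          (((cfg ι num den).nbhd (rt ι num den)).ncard : ℝ)) ↔ _
  rw [hSn, ncard_nbhd_rt, half_coe]
  have hne : ((cfg ι num den).nbhd (rt ι num den)).Nonempty := by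
    rw [nbhd_rt]
    exact ⟨ch ι num den (Classical.arbitrary ι), Set.mem_range_self _⟩
  rw [half_lt_div Fintype.card_pos]
  exact ⟨fun h => h.2, fun h => ⟨hne, h⟩⟩

end Truth

end S19
namespace S19

/-! ### GNN features on configuration graphs -/

section FeatCfg
variable (𝒢 : GNN (Fin 1)) {ι : Type} [Fintype ι] {num den : ι → ℕ}

lemma agg_mean_apply {V : Type} (s : Finset V) (x : V → ℝ) :
    Agg.apply Agg.mean s x = (∑ u ∈ s, x u) / (s.card : ℝ) := rfl

lemma feat_succ (G : LabeledGraph (Fin 1)) (ℓ : ℕ) (v : G.V) :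
    𝒢.feat Agg.mean G (ℓ+1) v = 𝒢.com ℓ (𝒢.feat Agg.mean G ℓ v)
      (fun k => Agg.apply Agg.mean (G.nbhdFinset v)
        (fun u => 𝒢.feat Agg.mean G ℓ u k)) := rfl

lemma feat_lf : ∀ (ℓ : ℕ) (i : ι) (j : Fin (den i)),
    𝒢.feat Agg.mean (cfg ι num den) ℓ (lf ι num den i j)
      = if (j : ℕ) < num i then Pv 𝒢 ℓ else Qv 𝒢 ℓ
  | 0, i, j => by
    funext k
    by_cases h : (j : ℕ) < num i
    · rw [if_pos h]
      show (if (cfg ι num den).label (lf ι num den i j) _ then (1:ℝ) else 0) = 1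
      rw [if_pos (label_lf_iff.mpr h)]
    · rw [if_neg h]
      show (if (cfg ι num den).label (lf ι num den i j) _ then (1:ℝ) else 0) = 0
      rw [if_neg (fun hc => h (label_lf_iff.mp hc))]
  | (ℓ+1), i, j => by
    have hmean : (fun k => Agg.apply Agg.mean ((cfg ι num den).nbhdFinset (lf ι num den i j))
        (fun u => 𝒢.feat Agg.mean (cfg ι num den) ℓ u k)) = (0 : Fin (𝒢.δ ℓ) → ℝ) := by
      funext k
      rw [agg_mean_apply, nbhdFinset_lf]
      simp
    rw [feat_succ, hmean, feat_lf ℓ i j]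
    by_cases h : (j : ℕ) < num i
    · rw [if_pos h, if_pos h]
      rfl
    · rw [if_neg h, if_neg h]
      rfl

lemma feat_ch (hden : ∀ i, 0 < den i) (hnum : ∀ i, num i ≤ den i) :
    ∀ (ℓ : ℕ) (i : ι),
      𝒢.feat Agg.mean (cfg ι num den) ℓ (ch ι num den i)
        = chF 𝒢 ((num i : ℝ) / (den i : ℝ)) ℓ
  | 0, i => by
    funext k
    show (if (cfg ι num den).label (ch ι num den i) _ then (1:ℝ) else 0) = 0
    rw [if_neg label_ch]
  | (ℓ+1), i => by
    have hmean : (fun k => Agg.apply Agg.mean ((cfg ι num den).nbhdFinset (ch ι num den i))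
        (fun u => 𝒢.feat Agg.mean (cfg ι num den) ℓ u k))
        = (fun k => ((num i : ℝ) / (den i : ℝ)) * Pv 𝒢 ℓ k
            + (1 - (num i : ℝ) / (den i : ℝ)) * Qv 𝒢 ℓ k) := by
      funext k
      rw [agg_mean_apply, nbhdFinset_ch, Finset.sum_map, Finset.card_map]
      simp only [Function.Embedding.coeFn_mk]
      have hcard : ((Finset.univ : Finset (Fin (den i))).card : ℝ) = (den i : ℝ) := by
        rw [Finset.card_univ, Fintype.card_fin]
      have hterm : ∀ j : Fin (den i),
          𝒢.feat Agg.mean (cfg ι num den) ℓ (lf ι num den i j) k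
            = if (j : ℕ) < num i then Pv 𝒢 ℓ k else Qv 𝒢 ℓ k := by
        intro j
        rw [feat_lf]
        by_cases h : (j : ℕ) < num i
        · rw [if_pos h, if_pos h]
        · rw [if_neg h, if_neg h]
      rw [Finset.sum_congr rfl fun j _ => hterm j]
      rw [Finset.sum_ite, Finset.sum_const, Finset.sum_const]
      have h1 : ((Finset.univ : Finset (Fin (den i))).filter fun j : Fin (den i) =>
          (j : ℕ) < num i).card = num i := card_filter_lt _ _ (hnum i)
      have h2 : ((Finset.univ : Finset (Fin (den i))).filter fun j : Fin (den i) =>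
          ¬ (j : ℕ) < num i).card = den i - num i := by
        have h3 := Finset.card_filter_add_card_filter_not
          (s := (Finset.univ : Finset (Fin (den i)))) (p := fun j : Fin (den i) => (j : ℕ) < num i)
        rw [Finset.card_univ, Fintype.card_fin, h1] at h3
        omega
      rw [h1, h2, hcard, nsmul_eq_mul, nsmul_eq_mul, Nat.cast_sub (hnum i)]
      have hd : (den i : ℝ) ≠ 0 := by
        have := hden i
        positivity
      field_simp
    rw [feat_succ, hmean, feat_ch hden hnum ℓ i]
    rfl

/-- the mean feature vector of the children of the root -/
noncomputable def meanOf (ι : Type) [Fintype ι] (num den : ι → ℕ) : Efin 𝒢 :=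
  fun ℓ k => (∑ i, chF 𝒢 ((num i : ℝ) / (den i : ℝ)) ℓ.1 k) / (Fintype.card ι : ℝ)

lemma feat_rt (hden : ∀ i, 0 < den i) (hnum : ∀ i, num i ≤ den i) :
    ∀ ℓ, ℓ ≤ 𝒢.L →
      𝒢.feat Agg.mean (cfg ι num den) ℓ (rt ι num den)
        = rootF 𝒢 (meanOf 𝒢 ι num den) ℓ
  | 0, _ => by
    funext k
    show (if (cfg ι num den).label (rt ι num den) _ then (1:ℝ) else 0) = 0
    rw [if_neg label_rt]
  | (ℓ+1), h => by
    have hl : ℓ < 𝒢.L := h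
    have hmean : (fun k => Agg.apply Agg.mean ((cfg ι num den).nbhdFinset (rt ι num den))
        (fun u => 𝒢.feat Agg.mean (cfg ι num den) ℓ u k))
        = meanOf 𝒢 ι num den ⟨ℓ, hl⟩ := by
      funext k
      rw [agg_mean_apply, nbhdFinset_rt, Finset.sum_map, Finset.card_map, Finset.card_univ]
      simp only [Function.Embedding.coeFn_mk]
      rw [Finset.sum_congr rfl fun i _ => by rw [feat_ch 𝒢 hden hnum ℓ i]]
      rfl
    rw [feat_succ, hmean, feat_rt hden hnum ℓ (Nat.le_of_succ_le h)]
    show _ = 𝒢.com ℓ (rootF 𝒢 (meanOf 𝒢 ι num den) ℓ)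
      (if h' : ℓ < 𝒢.L then meanOf 𝒢 ι num den ⟨ℓ, h'⟩ else fun _ => 0)
    rw [dif_pos hl]

lemma accepts_iff (hden : ∀ i, 0 < den i) (hnum : ∀ i, num i ≤ den i) :
    𝒢.accepts Agg.mean (cfg ι num den) (rt ι num den) ↔
      (if 𝒢.clsStrict then 𝒢.clsThr < Yv 𝒢 (meanOf 𝒢 ι num den)
        else 𝒢.clsThr ≤ Yv 𝒢 (meanOf 𝒢 ι num den)) := by
  show (if 𝒢.clsStrict then
      𝒢.clsThr < 𝒢.feat Agg.mean (cfg ι num den) 𝒢.L (rt ι num den) 𝒢.clsIdx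
    else 𝒢.clsThr ≤ 𝒢.feat Agg.mean (cfg ι num den) 𝒢.L (rt ι num den) 𝒢.clsIdx) ↔ _
  rw [feat_rt 𝒢 hden hnum 𝒢.L le_rfl]
  rfl

end FeatCfg

end S19
namespace S19
open Filter Topology

/-! ### The convex-geometric core lemma -/

section ConvexCore
variable {E : Type*} [NormedAddCommGroup E] [NormedSpace ℝ E] [FiniteDimensional ℝ E]

lemma convex_core (v : ℕ → E) (hv : Tendsto v atTop (𝓝 0)) :
    ∃ (m : ℕ) (tt : Fin m → ℕ) (j : ℕ) (n : ℕ) (idx : Fin n → ℕ) (lam : Fin n → ℝ),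
      0 < m ∧ (∀ k, 0 ≤ lam k) ∧ (∑ k, lam k = 1) ∧
      ((m : ℝ)⁻¹ • ∑ k, v (tt k)) + (2:ℝ)⁻¹ • v j = ∑ k, lam k • v (idx k) := by
  by_cases h0 : ∃ j, v j = 0
  · obtain ⟨j, hj⟩ := h0
    exact ⟨1, fun _ => j, j, 1, fun _ => j, fun _ => 1, one_pos, fun _ => zero_le_one,
      by simp, by simp [hj]⟩
  push_neg at h0
  set W := Submodule.span ℝ (Set.range v) with hW
  let v' : ℕ → W := fun j => ⟨v j, Submodule.subset_span (Set.mem_range_self j)⟩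
  have hv' : Tendsto v' atTop (𝓝 0) := by
    rw [tendsto_subtype_rng]
    exact hv
  have hmem : ∀ j, v' j ∈ affineSpan ℝ (Set.range v') := fun j =>
    subset_affineSpan ℝ _ (Set.mem_range_self j)
  have h0W : (0 : W) ∈ affineSpan ℝ (Set.range v') := by
    have hcl : IsClosed ((affineSpan ℝ (Set.range v') : AffineSubspace ℝ W) : Set W) :=
      AffineSubspace.closed_of_finiteDimensional _
    exact hcl.mem_of_tendsto hv' (Filter.Eventually.of_forall hmem)
  have hle : W ≤ Submodule.map W.subtype (Submodule.span ℝ (Set.range v')) := by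
    conv_lhs => rw [hW]
    rw [Submodule.span_le]
    rintro x ⟨j, rfl⟩
    exact ⟨v' j, Submodule.subset_span (Set.mem_range_self j), rfl⟩
  have hsp : ∀ w : W, w ∈ Submodule.span ℝ (Set.range v') := by
    intro w
    obtain ⟨u, hu, huv⟩ := hle w.2
    have : u = w := Subtype.ext huv
    rwa [this] at hu
  have hdirle : Submodule.span ℝ (Set.range v') ≤ (affineSpan ℝ (Set.range v')).direction := by
    rw [Submodule.span_le]
    rintro x ⟨j, rfl⟩
    simpa using AffineSubspace.vsub_mem_direction (hmem j) h0W
  have hspan : affineSpan ℝ (Set.range v') = ⊤ := by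
    apply le_antisymm le_top
    intro w _
    have hw : w -ᵥ (0:W) ∈ (affineSpan ℝ (Set.range v')).direction := by
      apply hdirle
      simpa using hsp w
    simpa using AffineSubspace.vadd_mem_of_mem_direction hw h0W
  obtain ⟨t, hts, htspan, htind⟩ := exists_affineIndependent ℝ W (Set.range v')
  have htfin : t.Finite := finite_set_of_fin_dim_affineIndependent ℝ htind
  haveI := htfin.fintype
  have htne : t.Nonempty := by
    rcases t.eq_empty_or_nonempty with rfl | h
    · exfalso
      rw [AffineSubspace.span_empty, hspan] at htspan
      exact AffineSubspace.bot_ne_top ℝ W W htspan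
    · exact h
  haveI : Nonempty t := htne.to_subtype
  let B : AffineBasis t ℝ W := ⟨(↑), htind, by rw [Subtype.range_coe, htspan, hspan]⟩
  set m := Fintype.card t with hm
  have hmpos : 0 < m := Fintype.card_pos
  have hmne : (m : ℝ) ≠ 0 := by positivity
  let w0 : t → ℝ := fun _ => (m : ℝ)⁻¹
  have hw0 : ∑ i : t, w0 i = 1 := by
    simp only [w0, Finset.sum_const, Finset.card_univ, ← hm, nsmul_eq_mul]
    field_simp
  let c : W := Finset.univ.affineCombination ℝ B w0
  have hcoordc : ∀ i : t, B.coord i c = (m:ℝ)⁻¹ :=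
    fun i => B.coord_apply_combination_of_mem (Finset.mem_univ i) hw0
  let q : ℕ → W := fun j => c + (2:ℝ)⁻¹ • v' j
  have hq : Tendsto q atTop (𝓝 c) := by
    have h2 : Tendsto (fun j => (2:ℝ)⁻¹ • v' j) atTop (𝓝 ((2:ℝ)⁻¹ • (0:W))) :=
      hv'.const_smul _
    have := tendsto_const_nhds (x := c) (f := atTop (α := ℕ)) |>.add h2
    simpa using this
  have hpos : ∀ᶠ j in atTop, ∀ i : t, 0 < B.coord i (q j) := by
    rw [eventually_all]
    intro i
    have hcont : Continuous (B.coord i) := (B.coord i).continuous_of_finiteDimensional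
    have h1 : Tendsto (fun j => B.coord i (q j)) atTop (𝓝 (B.coord i c)) :=
      (hcont.tendsto c).comp hq
    apply h1.eventually
    rw [hcoordc i]
    exact eventually_gt_nhds (by positivity)
  obtain ⟨j, hj⟩ := hpos.exists
  have hrep : q j = ∑ i : t, B.coord i (q j) • (B i : W) := by
    conv_lhs => rw [← B.affineCombination_coord_eq_self (q j)]
    exact Finset.univ.affineCombination_eq_linear_combination _ _
      (B.sum_coord_apply_eq_one (q j))
  have hc : c = ∑ i : t, (m:ℝ)⁻¹ • (B i : W) :=
    Finset.univ.affineCombination_eq_linear_combination _ _ hw0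
  choose sel hsel using fun i : t => hts i.2
  let e : Fin m ≃ t := (Fintype.equivFin t).symm
  have hBe : ∀ i : t, (B i : W) = v' (sel i) := fun i => (hsel i).symm
  have keyW : ((m:ℝ)⁻¹ • ∑ k : Fin m, v' (sel (e k))) + (2:ℝ)⁻¹ • v' j
      = ∑ k : Fin m, B.coord (e k) (q j) • v' (sel (e k)) := by
    have h1 : ∑ k : Fin m, v' (sel (e k)) = ∑ i : t, (B i : W) := by
      rw [Equiv.sum_comp e (fun i => v' (sel i))]
      exact Finset.sum_congr rfl fun i _ => (hBe i).symm
    have h2 : ∑ k : Fin m, B.coord (e k) (q j) • v' (sel (e k))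
        = ∑ i : t, B.coord i (q j) • (B i : W) := by
      rw [Equiv.sum_comp e (fun i => B.coord i (q j) • v' (sel i))]
      exact Finset.sum_congr rfl fun i _ => by rw [hBe i]
    rw [h1, h2, ← hrep]
    show (m:ℝ)⁻¹ • ∑ i : t, (B i : W) + (2:ℝ)⁻¹ • v' j = c + (2:ℝ)⁻¹ • v' j
    rw [hc, Finset.smul_sum]
  refine ⟨m, fun k => sel (e k), j, m, fun k => sel (e k), fun k => B.coord (e k) (q j),
    hmpos, fun k => (hj (e k)).le, ?_, ?_⟩
  · rw [Equiv.sum_comp e (fun i => B.coord i (q j))]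
    exact B.sum_coord_apply_eq_one (q j)
  · have keyE := congrArg (Subtype.val) keyW
    simpa using keyE

end ConvexCore

end S19
namespace S19
open Filter Topology

/-! ### Specific configurations -/

/-- the formula ◊>½◊>½P -/
noncomputable def ff : RML (Fin 1) := RML.diaGt half (RML.diaGt half (RML.atom 0))

/-- ratio of the `s`-th approximating child type -/
noncomputable def rr (s : ℕ) : ℝ := ((s+3 : ℕ) : ℝ) / ((2*s+4 : ℕ) : ℝ)

/-- the boundary ratio -/
noncomputable def bb : ℝ := ((1 : ℕ) : ℝ) / ((2 : ℕ) : ℝ)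

section ChvB0
variable (𝒢 : GNN (Fin 1))

noncomputable def chv (s : ℕ) : Efin 𝒢 := fun ℓ k => chF 𝒢 (rr s) ℓ.1 k
noncomputable def b0 : Efin 𝒢 := fun ℓ k => chF 𝒢 bb ℓ.1 k

lemma rr_eq' (s : ℕ) : rr s = 1/2 + (2*(s:ℝ)+4)⁻¹ := by
  unfold rr
  have h : (0:ℝ) < 2*(s:ℝ)+4 := by positivity
  push_cast
  field_simp
  ring

lemma bb_eq : bb = 1/2 := by
  unfold bb
  norm_num

lemma rr_tendsto : Tendsto rr atTop (𝓝 bb) := by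
  have h1 : Tendsto (fun s : ℕ => (2*(s:ℝ)+4)) atTop atTop := by
    apply Filter.tendsto_atTop_add_const_right
    exact Tendsto.const_mul_atTop two_pos tendsto_natCast_atTop_atTop
  have h2 : Tendsto (fun s : ℕ => (2*(s:ℝ)+4)⁻¹) atTop (𝓝 0) :=
    tendsto_inv_atTop_zero.comp h1
  have h3 := (tendsto_const_nhds (x := (1/2:ℝ)) (f := atTop (α := ℕ))).add h2
  rw [bb_eq]
  simp only [add_zero] at h3
  exact h3.congr fun s => (rr_eq' s).symm

lemma chv_tendsto (hc : 𝒢.HasContinuousCom) : Tendsto (chv 𝒢) atTop (𝓝 (b0 𝒢)) := by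
  rw [tendsto_pi_nhds]
  intro ℓ
  have hcont : Continuous (fun ρ => chF 𝒢 ρ ℓ.1) := cont_chF 𝒢 hc ℓ.1 ℓ.2.le
  exact (hcont.tendsto bb).comp rr_tendsto

end ChvB0

/-! #### Configurations A (one good child) and B (one boundary child) -/

section ConfigsAB
variable (𝒢 : GNN (Fin 1))

lemma satA (s : ℕ) :
    RML.sat (cfg Unit (fun _ => s+3) (fun _ => 2*s+4)) ff (rt Unit _ _) := by
  rw [ff, sat_rt_iff (fun _ => by omega) (fun _ => by omega)]
  have hcount : (Finset.univ.filter fun _ : Unit => 2*s+4 < 2 * (s+3)).card = 1 := by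
    rw [Finset.filter_true_of_mem fun _ _ => by omega]
    simp
  rw [hcount]
  simp

lemma not_satB :
    ¬ RML.sat (cfg Unit (fun _ => 1) (fun _ => 2)) ff (rt Unit _ _) := by
  rw [ff, sat_rt_iff (fun _ => by omega) (fun _ => by omega)]
  have hcount : (Finset.univ.filter fun _ : Unit => 2 < 2 * 1).card = 0 := by
    rw [Finset.filter_false_of_mem fun _ _ => by omega]
    simp
  rw [hcount]
  simp

lemma meanA (s : ℕ) : meanOf 𝒢 Unit (fun _ => s+3) (fun _ => 2*s+4) = chv 𝒢 s := by
  funext ℓ k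
  show (∑ _i : Unit, chF 𝒢 (((s+3 : ℕ) : ℝ) / ((2*s+4 : ℕ) : ℝ)) ℓ.1 k)
      / ((Fintype.card Unit : ℕ) : ℝ) = chF 𝒢 (rr s) ℓ.1 k
  rw [Fintype.sum_unique, Fintype.card_unit]
  simp [rr]

lemma meanB : meanOf 𝒢 Unit (fun _ => 1) (fun _ => 2) = b0 𝒢 := by
  funext ℓ k
  show (∑ _i : Unit, chF 𝒢 (((1 : ℕ) : ℝ) / ((2 : ℕ) : ℝ)) ℓ.1 k)
      / ((Fintype.card Unit : ℕ) : ℝ) = chF 𝒢 bb ℓ.1 k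
  rw [Fintype.sum_unique, Fintype.card_unit]
  simp [bb]

end ConfigsAB

/-! #### Configuration T (the exact true configuration) -/

section ConfigT
variable (m j : ℕ) (tt : Fin m → ℕ)

abbrev ιT := (Fin m × Fin 2) ⊕ (Fin m ⊕ Fin m)

def numT : ιT m → ℕ := Sum.elim (fun p => tt p.1 + 3) (Sum.elim (fun _ => j + 3) (fun _ => 1))
def denT : ιT m → ℕ := Sum.elim (fun p => 2*tt p.1 + 4) (Sum.elim (fun _ => 2*j + 4) (fun _ => 2))

lemma hdenT : ∀ i : ιT m, 0 < denT m j tt i := by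
  rintro (p | (x | x))
  · show 0 < 2*tt p.1 + 4
    omega
  · show 0 < 2*j + 4
    omega
  · show 0 < 2
    omega

lemma hnumT : ∀ i : ιT m, numT m j tt i ≤ denT m j tt i := by
  rintro (p | (x | x))
  · show tt p.1 + 3 ≤ 2*tt p.1 + 4
    omega
  · show j + 3 ≤ 2*j + 4
    omega
  · show 1 ≤ 2
    omega

lemma cardT : Fintype.card (ιT m) = 4*m := by
  simp only [Fintype.card_sum, Fintype.card_prod, Fintype.card_fin]
  omega

lemma countT :
    (Finset.univ.filter fun i : ιT m => denT m j tt i < 2 * numT m j tt i).card = 3*m := by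
  rw [Finset.card_filter, Fintype.sum_sum_type, Fintype.sum_sum_type]
  have e1 : ∀ p : Fin m × Fin 2,
      (if denT m j tt (Sum.inl p) < 2 * numT m j tt (Sum.inl p) then (1:ℕ) else 0) = 1 :=
    fun p => if_pos (show 2*tt p.1 + 4 < 2 * (tt p.1 + 3) by omega)
  have e2 : ∀ x : Fin m,
      (if denT m j tt (Sum.inr (Sum.inl x)) < 2 * numT m j tt (Sum.inr (Sum.inl x))
        then (1:ℕ) else 0) = 1 :=
    fun x => if_pos (show 2*j + 4 < 2 * (j + 3) by omega)
  have e3 : ∀ x : Fin m,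
      (if denT m j tt (Sum.inr (Sum.inr x)) < 2 * numT m j tt (Sum.inr (Sum.inr x))
        then (1:ℕ) else 0) = 0 :=
    fun x => if_neg (show ¬ (2 < 2 * 1) by omega)
  rw [Finset.sum_congr rfl fun p _ => e1 p, Finset.sum_congr rfl fun x _ => e2 x,
    Finset.sum_congr rfl fun x _ => e3 x]
  simp only [Finset.sum_const, Finset.card_univ, Fintype.card_prod, Fintype.card_fin,
    smul_eq_mul, mul_one, mul_zero, add_zero]
  omega

lemma satT (hm : 0 < m) :
    RML.sat (cfg (ιT m) (numT m j tt) (denT m j tt)) ff (rt (ιT m) _ _) := by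
  haveI : Nonempty (ιT m) := ⟨Sum.inr (Sum.inr ⟨0, hm⟩)⟩
  rw [ff, sat_rt_iff (hdenT m j tt) (hnumT m j tt)]
  rw [countT, cardT]
  omega

lemma meanT_eq (𝒢 : GNN (Fin 1)) (ℓ : Fin 𝒢.L) (k : Fin (𝒢.δ ℓ.1)) :
    meanOf 𝒢 (ιT m) (numT m j tt) (denT m j tt) ℓ k
      = ((2:ℝ) * ∑ a : Fin m, chv 𝒢 (tt a) ℓ k
          + ((m:ℝ) * chv 𝒢 j ℓ k + (m:ℝ) * b0 𝒢 ℓ k)) / ((4*m : ℕ) : ℝ) := by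
  show (∑ i : ιT m, chF 𝒢 ((numT m j tt i : ℝ) / (denT m j tt i : ℝ)) ℓ.1 k)
      / ((Fintype.card (ιT m) : ℕ) : ℝ) = _
  rw [cardT]
  congr 1
  rw [Fintype.sum_sum_type, Fintype.sum_sum_type]
  have e1 : ∀ p : Fin m × Fin 2,
      chF 𝒢 ((numT m j tt (Sum.inl p) : ℝ) / (denT m j tt (Sum.inl p) : ℝ)) ℓ.1 k
        = chv 𝒢 (tt p.1) ℓ k := fun p => rfl
  have e2 : ∀ x : Fin m,
      chF 𝒢 ((numT m j tt (Sum.inr (Sum.inl x)) : ℝ)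
          / (denT m j tt (Sum.inr (Sum.inl x)) : ℝ)) ℓ.1 k = chv 𝒢 j ℓ k := fun x => rfl
  have e3 : ∀ x : Fin m,
      chF 𝒢 ((numT m j tt (Sum.inr (Sum.inr x)) : ℝ)
          / (denT m j tt (Sum.inr (Sum.inr x)) : ℝ)) ℓ.1 k = b0 𝒢 ℓ k := fun x => rfl
  rw [Finset.sum_congr rfl fun p _ => e1 p, Finset.sum_congr rfl fun x _ => e2 x,
    Finset.sum_congr rfl fun x _ => e3 x]
  rw [Fintype.sum_prod_type]
  have e4 : ∀ a : Fin m, (∑ _b : Fin 2, chv 𝒢 (tt a) ℓ k) = 2 * chv 𝒢 (tt a) ℓ k := by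
    intro a
    rw [Finset.sum_const, Finset.card_univ, Fintype.card_fin, nsmul_eq_mul]
    norm_num
  rw [Finset.sum_congr rfl fun a _ => e4 a, ← Finset.mul_sum, Finset.sum_const,
    Finset.sum_const, Finset.card_univ, Fintype.card_fin, nsmul_eq_mul, nsmul_eq_mul]

end ConfigT

/-! #### Configuration F (the false approximating configurations) -/

section ConfigF
variable (n : ℕ) (idx : Fin n → ℕ) (cnt : Fin n → ℕ) (bc : ℕ)

abbrev ιF := (Σ K : Fin n, Fin (cnt K)) ⊕ Fin bc

def numF : ιF n cnt bc → ℕ := Sum.elim (fun p => idx p.1 + 3) (fun _ => 1)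
def denF : ιF n cnt bc → ℕ := Sum.elim (fun p => 2*idx p.1 + 4) (fun _ => 2)

lemma hdenF : ∀ i : ιF n cnt bc, 0 < denF n idx cnt bc i := by
  rintro (p | x)
  · show 0 < 2*idx p.1 + 4
    omega
  · show 0 < 2
    omega

lemma hnumF : ∀ i : ιF n cnt bc, numF n idx cnt bc i ≤ denF n idx cnt bc i := by
  rintro (p | x)
  · show idx p.1 + 3 ≤ 2*idx p.1 + 4
    omega
  · show 1 ≤ 2
    omega

lemma cardF : Fintype.card (ιF n cnt bc) = (∑ K, cnt K) + bc := by
  simp only [Fintype.card_sum, Fintype.card_sigma, Fintype.card_fin]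

lemma countF :
    (Finset.univ.filter fun i : ιF n cnt bc =>
      denF n idx cnt bc i < 2 * numF n idx cnt bc i).card = ∑ K, cnt K := by
  rw [Finset.card_filter, Fintype.sum_sum_type]
  have e1 : ∀ p : Σ K : Fin n, Fin (cnt K),
      (if denF n idx cnt bc (Sum.inl p) < 2 * numF n idx cnt bc (Sum.inl p)
        then (1:ℕ) else 0) = 1 :=
    fun p => if_pos (show 2*idx p.1 + 4 < 2 * (idx p.1 + 3) by omega)
  have e2 : ∀ x : Fin bc,
      (if denF n idx cnt bc (Sum.inr x) < 2 * numF n idx cnt bc (Sum.inr x)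
        then (1:ℕ) else 0) = 0 :=
    fun x => if_neg (show ¬ (2 < 2 * 1) by omega)
  rw [Finset.sum_congr rfl fun p _ => e1 p, Finset.sum_congr rfl fun x _ => e2 x]
  simp only [Finset.sum_const, Finset.card_univ, Fintype.card_sigma, Fintype.card_fin,
    smul_eq_mul, mul_one, mul_zero, add_zero]

lemma not_satF (hb : 0 < bc)
    (hle : 2 * (∑ K, cnt K) ≤ (∑ K, cnt K) + bc) :
    ¬ RML.sat (cfg (ιF n cnt bc) (numF n idx cnt bc) (denF n idx cnt bc)) ff
      (rt (ιF n cnt bc) _ _) := by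
  haveI : Nonempty (ιF n cnt bc) := ⟨Sum.inr ⟨0, hb⟩⟩
  rw [ff, sat_rt_iff (hdenF n idx cnt bc) (hnumF n idx cnt bc)]
  rw [countF, cardF]
  omega

lemma meanF_eq (𝒢 : GNN (Fin 1)) (ℓ : Fin 𝒢.L) (k : Fin (𝒢.δ ℓ.1)) :
    meanOf 𝒢 (ιF n cnt bc) (numF n idx cnt bc) (denF n idx cnt bc) ℓ k
      = ((∑ K : Fin n, (cnt K : ℝ) * chv 𝒢 (idx K) ℓ k) + (bc:ℝ) * b0 𝒢 ℓ k)
        / ((((∑ K, cnt K) + bc : ℕ)) : ℝ) := by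
  show (∑ i : ιF n cnt bc, chF 𝒢 ((numF n idx cnt bc i : ℝ)
      / (denF n idx cnt bc i : ℝ)) ℓ.1 k) / ((Fintype.card (ιF n cnt bc) : ℕ) : ℝ) = _
  rw [cardF]
  congr 1
  rw [Fintype.sum_sum_type]
  have e1 : ∀ p : Σ K : Fin n, Fin (cnt K),
      chF 𝒢 ((numF n idx cnt bc (Sum.inl p) : ℝ) / (denF n idx cnt bc (Sum.inl p) : ℝ)) ℓ.1 k
        = chv 𝒢 (idx p.1) ℓ k := fun p => rfl
  have e2 : ∀ x : Fin bc,
      chF 𝒢 ((numF n idx cnt bc (Sum.inr x) : ℝ) / (denF n idx cnt bc (Sum.inr x) : ℝ)) ℓ.1 k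
        = b0 𝒢 ℓ k := fun x => rfl
  rw [Finset.sum_congr rfl fun p _ => e1 p, Finset.sum_congr rfl fun x _ => e2 x]
  rw [← Finset.univ_sigma_univ, Finset.sum_sigma]
  have e3 : ∀ K : Fin n, (∑ _x : Fin (cnt K), chv 𝒢 (idx K) ℓ k)
      = (cnt K : ℝ) * chv 𝒢 (idx K) ℓ k := by
    intro K
    rw [Finset.sum_const, Finset.card_univ, Fintype.card_fin, nsmul_eq_mul]
  rw [Finset.sum_congr rfl fun K _ => e3 K, Finset.sum_const, Finset.card_univ,
    Fintype.card_fin, nsmul_eq_mul]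

end ConfigF

end S19
open S19 Filter Topology in
/-- The RML formula ◊^{>1/2}◊^{>1/2}P (over Π = {P}) is not
expressible by any Mean-GNN with continuous combination functions. -/
theorem stmt19 :
    ¬ ∃ 𝒢 : GNN (Fin 1), 𝒢.HasContinuousCom ∧
      ∀ (G : LabeledGraph (Fin 1)) (v : G.V),
        𝒢.accepts Agg.mean G v ↔
          RML.sat G (RML.diaGt half (RML.diaGt half (RML.atom 0))) v := by
  rintro ⟨𝒢, hc, hcorrect⟩
  have hcorr : ∀ (G : LabeledGraph (Fin 1)) (v : G.V),
      𝒢.accepts Agg.mean G v ↔ RML.sat G ff v := hcorrect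
  cases hcs : 𝒢.clsStrict
  · -- non-strict classification
    have hacc : ∀ s : ℕ, 𝒢.clsThr ≤ Yv 𝒢 (chv 𝒢 s) := by
      intro s
      have h1 := (hcorr (cfg Unit (fun _ => s+3) (fun _ => 2*s+4))
        (rt Unit (fun _ => s+3) (fun _ => 2*s+4))).mpr (satA s)
      rw [accepts_iff 𝒢 (fun _ => by omega) (fun _ => by omega), hcs] at h1
      simp only [Bool.false_eq_true, if_false] at h1
      rwa [meanA] at h1
    have htd : Tendsto (fun s => Yv 𝒢 (chv 𝒢 s)) atTop (𝓝 (Yv 𝒢 (b0 𝒢))) :=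
      ((cont_Yv 𝒢 hc).tendsto _).comp (chv_tendsto 𝒢 hc)
    have hge : 𝒢.clsThr ≤ Yv 𝒢 (b0 𝒢) :=
      ge_of_tendsto htd (Filter.Eventually.of_forall hacc)
    have hB : ¬ 𝒢.accepts Agg.mean (cfg Unit (fun _ => 1) (fun _ => 2))
        (rt Unit (fun _ => 1) (fun _ => 2)) :=
      fun haccB => not_satB ((hcorr _ _).mp haccB)
    apply hB
    rw [accepts_iff 𝒢 (fun _ => by omega) (fun _ => by omega), hcs]
    simp only [Bool.false_eq_true, if_false]
    rwa [meanB]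
  · -- strict classification
    have hv0 : Tendsto (fun s => chv 𝒢 s - b0 𝒢) atTop (𝓝 0) := by
      have := (chv_tendsto 𝒢 hc).sub (tendsto_const_nhds (x := b0 𝒢))
      simpa using this
    obtain ⟨m, tt, j, n, idx, lam, hm, hlam0, hlam1, heq⟩ :=
      convex_core (fun s => chv 𝒢 s - b0 𝒢) hv0
    -- pointwise version of the convex identity
    have hsc : ∀ (ℓ : Fin 𝒢.L) (k : Fin (𝒢.δ ℓ.1)),
        (m:ℝ)⁻¹ * (∑ K : Fin m, (chv 𝒢 (tt K) ℓ k - b0 𝒢 ℓ k))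
          + 2⁻¹ * (chv 𝒢 j ℓ k - b0 𝒢 ℓ k)
          = ∑ K : Fin n, lam K * (chv 𝒢 (idx K) ℓ k - b0 𝒢 ℓ k) := by
      intro ℓ k
      have h1 := congrFun (congrFun heq ℓ) k
      simpa [Finset.sum_apply, smul_eq_mul] using h1
    set Tinf : Efin 𝒢 := fun ℓ k =>
      b0 𝒢 ℓ k + 2⁻¹ * ∑ K : Fin n, lam K * (chv 𝒢 (idx K) ℓ k - b0 𝒢 ℓ k) with hTinf
    have hmne : (m:ℝ) ≠ 0 := by positivity
    -- the true configuration has mean exactly Tinf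
    have hmeanT : meanOf 𝒢 (ιT m) (numT m j tt) (denT m j tt) = Tinf := by
      funext ℓ k
      rw [meanT_eq]
      show _ = b0 𝒢 ℓ k + 2⁻¹ * ∑ K : Fin n, lam K * (chv 𝒢 (idx K) ℓ k - b0 𝒢 ℓ k)
      rw [← hsc ℓ k]
      rw [Finset.sum_sub_distrib, Finset.sum_const, Finset.card_univ, Fintype.card_fin,
        nsmul_eq_mul]
      push_cast
      field_simp
      ring
    have haccT : 𝒢.clsThr < Yv 𝒢 Tinf := by
      have h1 := (hcorr (cfg (ιT m) (numT m j tt) (denT m j tt))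
        (rt (ιT m) (numT m j tt) (denT m j tt))).mpr (satT m j tt hm)
      rw [accepts_iff 𝒢 (hdenT m j tt) (hnumT m j tt), hcs] at h1
      simp only [if_true] at h1
      rwa [hmeanT] at h1
    -- the false approximating configurations
    set cnt : ℕ → Fin n → ℕ := fun r K => ⌊lam K * (r:ℝ)⌋₊ with hcnt
    have hSC : ∀ r : ℕ, (∑ K, cnt r K) ≤ r := by
      intro r
      have h1 : ((∑ K, cnt r K : ℕ) : ℝ) ≤ (r:ℝ) := by
        push_cast
        calc ∑ K : Fin n, ((⌊lam K * (r:ℝ)⌋₊ : ℕ) : ℝ)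
            ≤ ∑ K : Fin n, lam K * (r:ℝ) :=
              Finset.sum_le_sum fun K _ =>
                Nat.floor_le (mul_nonneg (hlam0 K) (Nat.cast_nonneg r))
          _ = (∑ K : Fin n, lam K) * (r:ℝ) := by rw [Finset.sum_mul]
          _ = (r:ℝ) := by rw [hlam1, one_mul]
      exact_mod_cast h1
    set bc : ℕ → ℕ := fun r => 2*r - (∑ K, cnt r K) with hbc
    have hrej : ∀ r : ℕ, 1 ≤ r →
        Yv 𝒢 (meanOf 𝒢 (ιF n (cnt r) (bc r)) (numF n idx (cnt r) (bc r))
          (denF n idx (cnt r) (bc r))) ≤ 𝒢.clsThr := by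
      intro r hr
      by_contra hcon
      push_neg at hcon
      have hacc : 𝒢.accepts Agg.mean
          (cfg (ιF n (cnt r) (bc r)) (numF n idx (cnt r) (bc r)) (denF n idx (cnt r) (bc r)))
          (rt (ιF n (cnt r) (bc r)) (numF n idx (cnt r) (bc r)) (denF n idx (cnt r) (bc r))) := by
        rw [accepts_iff 𝒢 (hdenF n idx (cnt r) (bc r)) (hnumF n idx (cnt r) (bc r)), hcs]
        simpa using hcon
      refine not_satF n idx (cnt r) (bc r) ?_ ?_ ((hcorr _ _).mp hacc)
      · have := hSC r
        simp only [hbc]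
        omega
      · have := hSC r
        simp only [hbc]
        omega
    -- the false means tend to Tinf
    have htd : Tendsto (fun r => meanOf 𝒢 (ιF n (cnt r) (bc r)) (numF n idx (cnt r) (bc r))
        (denF n idx (cnt r) (bc r))) atTop (𝓝 Tinf) := by
      rw [tendsto_pi_nhds]
      intro ℓ
      rw [tendsto_pi_nhds]
      intro k
      have hterm : ∀ K : Fin n,
          Tendsto (fun r : ℕ => ((cnt r K : ℝ)/(2*(r:ℝ)))) atTop (𝓝 (lam K / 2)) := by
        intro K
        have h1 : Tendsto (fun r : ℕ => ((⌊lam K * (r:ℝ)⌋₊ : ℕ) : ℝ)/(r:ℝ)) atTop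
            (𝓝 (lam K)) :=
          (tendsto_nat_floor_mul_div_atTop (hlam0 K)).comp tendsto_natCast_atTop_atTop
        have h2 := h1.div_const 2
        refine h2.congr fun r => ?_
        simp only [hcnt]
        rw [div_div, mul_comm (r:ℝ) 2]
      have hsum : Tendsto (fun r : ℕ => ∑ K : Fin n,
          ((cnt r K : ℝ)/(2*(r:ℝ))) * (chv 𝒢 (idx K) ℓ k - b0 𝒢 ℓ k)) atTop
          (𝓝 (∑ K : Fin n, (lam K / 2) * (chv 𝒢 (idx K) ℓ k - b0 𝒢 ℓ k))) :=
        tendsto_finset_sum _ fun K _ => (hterm K).mul_const _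
      have hfull := (tendsto_const_nhds (x := b0 𝒢 ℓ k) (f := atTop (α := ℕ))).add hsum
      have hTval : Tinf ℓ k = b0 𝒢 ℓ k
          + ∑ K : Fin n, (lam K / 2) * (chv 𝒢 (idx K) ℓ k - b0 𝒢 ℓ k) := by
        show b0 𝒢 ℓ k + 2⁻¹ * ∑ K : Fin n, lam K * (chv 𝒢 (idx K) ℓ k - b0 𝒢 ℓ k) = _
        rw [Finset.mul_sum]
        congr 1
        exact Finset.sum_congr rfl fun K _ => by ring
      rw [hTval]
      refine hfull.congr' ?_
      filter_upwards [eventually_ge_atTop 1] with r hr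
      have h2r : (2*(r:ℝ)) ≠ 0 := by
        have : (0:ℝ) < (r:ℝ) := by exact_mod_cast hr
        positivity
      have hsum2 : (∑ K, cnt r K) + bc r = 2*r := by
        have := hSC r
        simp only [hbc]
        omega
      rw [meanF_eq n idx (cnt r) (bc r) 𝒢 ℓ k, hsum2]
      have hbccast : ((bc r : ℕ) : ℝ) = 2*(r:ℝ) - (∑ K : Fin n, (cnt r K : ℝ)) := by
        simp only [hbc]
        have h1 : (∑ K, cnt r K) ≤ 2*r := le_trans (hSC r) (by omega)
        push_cast [Nat.cast_sub h1]
        ring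
      have hsplit : ∑ K : Fin n, ((cnt r K : ℝ)/(2*(r:ℝ))) * (chv 𝒢 (idx K) ℓ k - b0 𝒢 ℓ k)
          = ((∑ K : Fin n, (cnt r K : ℝ) * chv 𝒢 (idx K) ℓ k)
              - (∑ K : Fin n, (cnt r K : ℝ)) * b0 𝒢 ℓ k) / (2*(r:ℝ)) := by
        have e1 : ∀ K : Fin n, ((cnt r K : ℝ)/(2*(r:ℝ))) * (chv 𝒢 (idx K) ℓ k - b0 𝒢 ℓ k)
            = ((cnt r K : ℝ) * chv 𝒢 (idx K) ℓ k - (cnt r K : ℝ) * b0 𝒢 ℓ k)/(2*(r:ℝ)) :=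
          fun K => by ring
        rw [Finset.sum_congr rfl fun K _ => e1 K, ← Finset.sum_div, Finset.sum_sub_distrib,
          ← Finset.sum_mul]
      rw [hsplit, hbccast]
      push_cast
      field_simp
      ring
    have hYtd : Tendsto (fun r => Yv 𝒢 (meanOf 𝒢 (ιF n (cnt r) (bc r))
        (numF n idx (cnt r) (bc r)) (denF n idx (cnt r) (bc r)))) atTop (𝓝 (Yv 𝒢 Tinf)) :=
      ((cont_Yv 𝒢 hc).tendsto Tinf).comp htd
    have hle : Yv 𝒢 Tinf ≤ 𝒢.clsThr := by
      refine le_of_tendsto hYtd ?_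
      filter_upwards [eventually_ge_atTop 1] with r hr
      exact hrej r hr
    exact absurd haccT (not_lt.mpr hle)
end
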